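/- arXiv:0905.3514 — 6 statements merged into one kernel-verified Lean document; each statement's English description precedes it below -/
import Mathlib

section
/- Let K and L be nonempty compact convex sets in ℝⁿ, and let 1 ≤ d ≤ n. Then the following are equivalent: (i) for every polytope Q ⊆ K having at most d+1 vertices (i.e., Q is the convex hull of at most d+1 points of K), there exists v ∈ ℝⁿ such that Q + v ⊆ L; (ii) for every d-dimensional linear subspace ξ of ℝⁿ, there exists v ∈ ξ such that K_ξ + v ⊆ L_ξ, where K_ξ and L_ξ denote the orthogonal projections of K and L onto ξ. -/
open Set

/-- The orthogonal projection of `ℝⁿ` onto a subspace `ξ`, viewed as a map `ℝⁿ → ℝⁿ`. -/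
noncomputable def projSub {n : ℕ} (ξ : Submodule ℝ (EuclideanSpace ℝ (Fin n)))
    (x : EuclideanSpace ℝ (Fin n)) : EuclideanSpace ℝ (Fin n) :=
  (ξ.orthogonalProjectionOnto x : EuclideanSpace ℝ (Fin n))

/-- The orthogonal projection of `ℝⁿ` onto the hyperplane `u^⊥`. -/
noncomputable def projHyp {n : ℕ} (u : EuclideanSpace ℝ (Fin n)) :
    EuclideanSpace ℝ (Fin n) → EuclideanSpace ℝ (Fin n) :=
  projSub ((Submodule.span ℝ {u})ᗮ)

/-- `IsSimplex n Δ` : `Δ` is an `n`-simplex in `ℝⁿ`, i.e. the convex hull of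
`n+1` affinely independent points. -/
def IsSimplex (n : ℕ) (Δ : Set (EuclideanSpace ℝ (Fin n))) : Prop :=
  ∃ p : Fin (n + 1) → EuclideanSpace ℝ (Fin n),
    AffineIndependent ℝ p ∧ Δ = convexHull ℝ (Set.range p)

open Module RealInnerProductSpace

/-- Any subspace of `ℝⁿ` of dimension at most `d ≤ n` is contained in a subspace of
dimension exactly `d`. -/
lemma aux_exists_superspace {n : ℕ} (d : ℕ) (hdn : d ≤ n) :
    ∀ (k : ℕ) (W : Submodule ℝ (EuclideanSpace ℝ (Fin n))),
      Module.finrank ℝ W + k = d → ∃ ξ, W ≤ ξ ∧ Module.finrank ℝ ξ = d := by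
  intro k
  induction k with
  | zero => exact fun W h => ⟨W, le_rfl, by omega⟩
  | succ k ih =>
    intro W h
    have hfr : Module.finrank ℝ (EuclideanSpace ℝ (Fin n)) = n := finrank_euclideanSpace_fin
    have hWne : W ≠ ⊤ := by
      intro htop
      have : Module.finrank ℝ W = n := by rw [htop, finrank_top, hfr]
      omega
    obtain ⟨x, -, hx⟩ := SetLike.exists_of_lt (show W < ⊤ from lt_top_iff_ne_top.2 hWne)
    have hx0 : x ≠ 0 := fun h0 => hx (h0 ▸ W.zero_mem)
    have hinf : W ⊓ Submodule.span ℝ {x} = ⊥ := by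
      rw [eq_bot_iff]
      rintro y ⟨hyW, hySp⟩
      obtain ⟨c, rfl⟩ := Submodule.mem_span_singleton.1 hySp
      rcases eq_or_ne c 0 with rfl | hc
      · simp
      · exact absurd (by simpa [smul_smul, inv_mul_cancel₀ hc] using W.smul_mem c⁻¹ hyW) hx
    have hrank : Module.finrank ℝ (W ⊔ Submodule.span ℝ {x} : Submodule ℝ _) =
        Module.finrank ℝ W + 1 := by
      have := Submodule.finrank_sup_add_finrank_inf_eq W (Submodule.span ℝ {x})
      rw [hinf, finrank_bot, finrank_span_singleton hx0] at this
      omega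
    obtain ⟨ξ, hle, hd⟩ := ih (W ⊔ Submodule.span ℝ {x}) (by omega)
    exact ⟨ξ, le_trans le_sup_left hle, hd⟩

/-- For `w ∈ ξ`, inner products don't see the orthogonal complement. -/
lemma aux_inner_proj {n : ℕ} (ξ : Submodule ℝ (EuclideanSpace ℝ (Fin n)))
    {w : EuclideanSpace ℝ (Fin n)} (hw : w ∈ ξ) (x : EuclideanSpace ℝ (Fin n)) :
    ⟪w, x⟫ = ⟪w, projSub ξ x⟫ := by
  have h0 : ⟪w, x - projSub ξ x⟫ = 0 :=
    (Submodule.mem_orthogonal ξ _).1 (ξ.sub_starProjection_mem_orthogonal x) w hw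
  rw [inner_sub_right] at h0
  linarith

/-- **Generalized Inscribed Polytope Containment Theorem.** -/
theorem stmt_3 {n : ℕ} (hn : 1 ≤ n) (d : ℕ) (hd1 : 1 ≤ d) (hdn : d ≤ n)
    (K L : Set (EuclideanSpace ℝ (Fin n)))
    (hKne : K.Nonempty) (hKcp : IsCompact K) (hKcv : Convex ℝ K)
    (hLne : L.Nonempty) (hLcp : IsCompact L) (hLcv : Convex ℝ L) :
    (∀ Q : Set (EuclideanSpace ℝ (Fin n)),
      (∃ s : Finset (EuclideanSpace ℝ (Fin n)), s.card ≤ d + 1 ∧ ↑s ⊆ K ∧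
        Q = convexHull ℝ (↑s : Set (EuclideanSpace ℝ (Fin n)))) →
      ∃ v : EuclideanSpace ℝ (Fin n), (fun x => x + v) '' Q ⊆ L) ↔
    (∀ ξ : Submodule ℝ (EuclideanSpace ℝ (Fin n)), Module.finrank ℝ ξ = d →
      ∃ v ∈ ξ, (fun x => x + v) '' (projSub ξ '' K) ⊆ projSub ξ '' L) := by
  classical
  constructor
  · -- (i) → (ii), via Helly for compact convex sets inside ξ
    intro hi ξ hξ
    set P := ξ.orthogonalProjectionOnto with hP
    set L' : Set ξ := (⇑P) '' L with hL'
    have hL'cp : IsCompact L' := hLcp.image P.continuous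
    have hL'cv : Convex ℝ L' := by
      have := hLcv.linear_image (P : EuclideanSpace ℝ (Fin n) →ₗ[ℝ] ξ)
      simpa using this
    set F : K → Set ξ := fun k => (fun x => x - P k.1) '' L' with hF
    have hFcv : ∀ k : K, Convex ℝ (F k) := by
      intro k
      have heq : (fun x : ξ => x - P k.1) = fun x => -P k.1 + x :=
        funext fun x => by rw [sub_eq_neg_add]
      rw [hF]; simp only [heq]
      exact hL'cv.translate _
    have hFcp : ∀ k : K, IsCompact (F k) :=
      fun k => hL'cp.image (continuous_id.sub continuous_const)
    have h_inter : ∀ I : Finset K, I.card ≤ Module.finrank ℝ ξ + 1 →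
        (⋂ k ∈ I, F k).Nonempty := by
      intro I hIcard
      set s : Finset (EuclideanSpace ℝ (Fin n)) := I.image Subtype.val with hs
      obtain ⟨v, hv⟩ := hi (convexHull ℝ (↑s : Set (EuclideanSpace ℝ (Fin n))))
        ⟨s, le_trans Finset.card_image_le (hξ ▸ hIcard), by
          rintro x hx
          simp only [hs, Finset.coe_image, Set.mem_image, Finset.mem_coe] at hx
          obtain ⟨k, -, rfl⟩ := hx
          exact k.2, rfl⟩
      refine ⟨P v, ?_⟩
      rw [Set.mem_iInter₂]
      intro k hk
      have hkQ : (k : EuclideanSpace ℝ (Fin n)) ∈ convexHull ℝ (↑s : Set _) :=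
        subset_convexHull ℝ _ (by
          simp only [hs, Finset.coe_image, Set.mem_image, Finset.mem_coe]
          exact ⟨k, hk, rfl⟩)
      have hkL : (k : EuclideanSpace ℝ (Fin n)) + v ∈ L := hv ⟨_, hkQ, rfl⟩
      refine ⟨P ((k : EuclideanSpace ℝ (Fin n)) + v), Set.mem_image_of_mem _ hkL, ?_⟩
      show P ((k : EuclideanSpace ℝ (Fin n)) + v) - P ↑k = P v
      rw [map_add, add_sub_cancel_left]
    obtain ⟨v', hv'⟩ := Convex.helly_theorem_compact' (𝕜 := ℝ) hFcv hFcp (by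
      intro I hI
      exact h_inter I hI)
    refine ⟨(v' : EuclideanSpace ℝ (Fin n)), v'.2, ?_⟩
    rintro _ ⟨_, ⟨k, hk, rfl⟩, rfl⟩
    have hm : v' ∈ F ⟨k, hk⟩ := by
      have := Set.mem_iInter.1 hv' ⟨k, hk⟩
      exact this
    obtain ⟨_, ⟨l, hl, rfl⟩, hz⟩ := hm
    refine ⟨l, hl, ?_⟩
    have hz' : P l - P k = v' := hz
    have hPl : P l = P k + v' := sub_eq_iff_eq_add'.1 hz'
    show (P l : EuclideanSpace ℝ (Fin n)) = projSub ξ k + (v' : EuclideanSpace ℝ (Fin n))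
    rw [hPl]
    rfl
  · -- (ii) → (i), via separation in a product space
    intro hii Q hQ
    obtain ⟨s, hcard, hsK, rfl⟩ := hQ
    suffices h : ∃ v, ∀ q ∈ (↑s : Set (EuclideanSpace ℝ (Fin n))), q + v ∈ L by
      obtain ⟨v, hv⟩ := h
      refine ⟨v, ?_⟩
      rintro _ ⟨y, hy, rfl⟩
      have hSc : Convex ℝ ((fun l => l + -v) '' L) := by
        have heq : (fun l : EuclideanSpace ℝ (Fin n) => l + -v) = fun l => -v + l :=
          funext fun l => add_comm _ _
        rw [heq]; exact hLcv.translate _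
      have hsub : convexHull ℝ (↑s : Set (EuclideanSpace ℝ (Fin n))) ⊆
          (fun l => l + -v) '' L :=
        convexHull_min (fun q hq => ⟨q + v, hv q hq, by simp⟩) hSc
      obtain ⟨l, hl, he⟩ := hsub hy
      have hyv : y + v = l := by rw [← he]; simp
      show y + v ∈ L
      rwa [hyv]
    rcases Finset.eq_empty_or_nonempty s with rfl | ⟨q₀, hq₀⟩
    · exact ⟨0, by simp⟩
    by_contra hcon
    push_neg at hcon
    -- product space setup
    let V := (↥s) → EuclideanSpace ℝ (Fin n)
    let C : ↥s → Set (EuclideanSpace ℝ (Fin n)) := fun q => (fun l => -q.1 + l) '' L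
    have hCcv : ∀ q : ↥s, Convex ℝ (C q) := fun q => by
      show Convex ℝ ((fun l => -q.1 + l) '' L)
      exact hLcv.translate _
    have hCcp : ∀ q : ↥s, IsCompact (C q) := fun q => by
      show IsCompact ((fun l => -q.1 + l) '' L)
      exact hLcp.image (continuous_const.add continuous_id)
    set D : Set V := Set.univ.pi C with hD
    have hDcp : IsCompact D := isCompact_univ_pi hCcp
    have hDcv : Convex ℝ D := convex_pi fun q _ => hCcv q
    let δ : EuclideanSpace ℝ (Fin n) →ₗ[ℝ] V := LinearMap.pi fun _ => LinearMap.id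
    set Δ : Submodule ℝ V := LinearMap.range δ with hΔ
    have hΔcl : IsClosed (Δ : Set V) := Δ.closed_of_finiteDimensional
    have hΔcv : Convex ℝ (Δ : Set V) := Δ.convex
    have hdisj : Disjoint D (Δ : Set V) := by
      rw [Set.disjoint_left]
      rintro g hgD ⟨x, rfl⟩
      obtain ⟨q, hq', hqL⟩ := hcon x
      have hq : q ∈ s := Finset.mem_coe.1 hq'
      have hmem : δ x ⟨q, hq⟩ ∈ C ⟨q, hq⟩ := hgD ⟨q, hq⟩ (Set.mem_univ _)
      obtain ⟨lq, hlq, he⟩ := hmem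
      have hδ : δ x ⟨q, hq⟩ = x := rfl
      rw [hδ] at he
      have hql : q + x = lq := by rw [← he]; simp
      exact hqL (hql ▸ hlq)
    obtain ⟨f, a, b, hfD, hab, hfΔ⟩ :=
      geometric_hahn_banach_compact_closed hDcv hDcp hΔcv hΔcl hdisj
    have hb0 : b < 0 := by
      have := hfΔ 0 Δ.zero_mem
      rwa [map_zero] at this
    have hδ0 : ∀ x : EuclideanSpace ℝ (Fin n), f (δ x) = 0 := by
      intro x
      by_contra ht
      have hmem : ∀ c : ℝ, c • δ x ∈ Δ := fun c => Δ.smul_mem c ⟨x, rfl⟩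
      have hlt : ∀ c : ℝ, b < c * f (δ x) := by
        intro c
        have := hfΔ _ (hmem c)
        rwa [map_smul, smul_eq_mul] at this
      have := hlt ((b - 1) / f (δ x))
      rw [div_mul_cancel₀ _ ht] at this
      linarith
    -- the representing vectors
    let e : ↥s → (EuclideanSpace ℝ (Fin n) →ₗ[ℝ] V) := fun q =>
      LinearMap.single ℝ (fun _ : ↥s => EuclideanSpace ℝ (Fin n)) q
    let u : ↥s → EuclideanSpace ℝ (Fin n) := fun q =>
      (InnerProductSpace.toDual ℝ (EuclideanSpace ℝ (Fin n))).symm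
        ((f.toLinearMap.comp (e q)).toContinuousLinearMap)
    have key : ∀ (q : ↥s) (x : EuclideanSpace ℝ (Fin n)), ⟪u q, x⟫ = f (Pi.single q x) := by
      intro q x
      rw [InnerProductSpace.toDual_symm_apply]
      simp only [LinearMap.coe_toContinuousLinearMap', LinearMap.coe_comp,
        ContinuousLinearMap.coe_coe, Function.comp_apply]
      exact congrArg f (LinearMap.single_apply (R := ℝ) (φ := fun _ : ↥s => EuclideanSpace ℝ (Fin n)) x)
    have hfg : ∀ g : V, f g = ∑ q, ⟪u q, g q⟫ := by
      intro g
      simp_rw [key]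
      rw [← map_sum, Finset.univ_sum_single]
    have hsum : ∑ q, u q = 0 := by
      have h0 : ∀ x : EuclideanSpace ℝ (Fin n), ⟪∑ q, u q, x⟫ = 0 := by
        intro x
        rw [sum_inner]
        simp_rw [key]
        rw [← map_sum]
        have : (∑ q : ↥s, Pi.single q x) = δ x := Finset.univ_sum_single (fun _ : ↥s => x)
        rw [this, hδ0]
      have := h0 (∑ q, u q)
      rwa [real_inner_self_eq_norm_sq, pow_eq_zero_iff (two_ne_zero), norm_eq_zero] at this
    -- span of the u's has dimension ≤ d
    set W : Submodule ℝ (EuclideanSpace ℝ (Fin n)) := Submodule.span ℝ (Set.range u) with hW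
    have hWle : Module.finrank ℝ W ≤ d := by
      set q₀' : ↥s := ⟨q₀, hq₀⟩
      set t : Finset (EuclideanSpace ℝ (Fin n)) := (Finset.univ.erase q₀').image u with ht
      have h1 : W ≤ Submodule.span ℝ (t : Set (EuclideanSpace ℝ (Fin n))) := by
        rw [hW, Submodule.span_le]
        rintro _ ⟨q, rfl⟩
        by_cases hq : q = q₀'
        · rw [hq]
          have hrel : u q₀' + ∑ p ∈ Finset.univ.erase q₀', u p = 0 := by
            rw [Finset.add_sum_erase _ u (Finset.mem_univ q₀'), hsum]
          have : u q₀' = -∑ p ∈ Finset.univ.erase q₀', u p := eq_neg_of_add_eq_zero_left hrel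
          rw [SetLike.mem_coe, this]
          exact Submodule.neg_mem _ (Submodule.sum_mem _ fun p hp =>
            Submodule.subset_span (Finset.mem_coe.2 (Finset.mem_image_of_mem u hp)))
        · exact Submodule.subset_span (Finset.mem_coe.2 (Finset.mem_image_of_mem u
            (Finset.mem_erase.2 ⟨hq, Finset.mem_univ q⟩)))
      have h2 : Module.finrank ℝ W ≤ Module.finrank ℝ (Submodule.span ℝ (t : Set (EuclideanSpace ℝ (Fin n)))) :=
        Submodule.finrank_mono h1
      have h3 : Module.finrank ℝ (Submodule.span ℝ (t : Set (EuclideanSpace ℝ (Fin n)))) ≤ t.card := by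
        have := finrank_span_finset_le_card (R := ℝ) t
        rwa [Set.finrank] at this
      have h4 : t.card ≤ (Finset.univ.erase q₀').card := Finset.card_image_le
      have h5 : (Finset.univ.erase q₀').card = Fintype.card ↥s - 1 := by
        rw [Finset.card_erase_of_mem (Finset.mem_univ _), Finset.card_univ]
      have h6 : Fintype.card ↥s = s.card := Fintype.card_coe s
      have h7 : 1 ≤ s.card := Finset.card_pos.2 ⟨q₀, hq₀⟩
      omega
    obtain ⟨ξ, hWξ, hξd⟩ := aux_exists_superspace d hdn (d - Module.finrank ℝ W) W (by omega)
    obtain ⟨v, hvξ, hvsub⟩ := hii ξ hξd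
    have hproj : ∀ q : ↥s, projSub ξ q.1 + v ∈ projSub ξ '' L := fun q =>
      hvsub ⟨projSub ξ q.1, ⟨q.1, hsK q.2, rfl⟩, rfl⟩
    choose l hlL hlP using hproj
    set g : V := fun q => -q.1 + l q with hg
    have hgD : g ∈ D := by
      intro q _
      exact ⟨l q, hlL q, rfl⟩
    have hgneg : f g < a := hfD g hgD
    have hu_mem : ∀ q : ↥s, u q ∈ ξ := fun q => hWξ (Submodule.subset_span ⟨q, rfl⟩)
    have hterm : ∀ q : ↥s, ⟪u q, g q⟫ = ⟪u q, v⟫ := by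
      intro q
      have h1 : ⟪u q, g q⟫ = ⟪u q, l q⟫ - ⟪u q, q.1⟫ := by
        show ⟪u q, -q.1 + l q⟫ = _
        rw [inner_add_right, inner_neg_right]
        ring
      rw [h1, aux_inner_proj ξ (hu_mem q) (l q), aux_inner_proj ξ (hu_mem q) q.1, hlP q,
        inner_add_right]
      ring
    have hfg0 : f g = 0 := by
      rw [hfg g]
      simp_rw [hterm]
      rw [← sum_inner, hsum, inner_zero_left]
    linarith
end

section
/- Let T be an n-simplex in ℝⁿ (the convex hull of n+1 affinely independent points), and let Q be a polytope in ℝⁿ having at most n vertices (the convex hull of at most n points). Suppose that for every unit vector u ∈ ℝⁿ there exists v ∈ u^⊥ such that Q_u + v ⊆ T_u, where Q_u and T_u denote the orthogonal projections of Q and T onto the hyperplane u^⊥. Then there exists v₀ ∈ ℝⁿ such that Q + v₀ ⊆ T. -/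
open Set

set_option maxHeartbeats 1000000 in
/-- Shadow covering by a simplex for a polytope with at most n vertices. -/
theorem stmt_4 {n : ℕ} (hn : 1 ≤ n) (T Q : Set (EuclideanSpace ℝ (Fin n)))
    (hT : IsSimplex n T)
    (hQ : ∃ s : Finset (EuclideanSpace ℝ (Fin n)), s.card ≤ n ∧
      Q = convexHull ℝ (↑s : Set (EuclideanSpace ℝ (Fin n))))
    (h : ∀ u : EuclideanSpace ℝ (Fin n), ‖u‖ = 1 →
      ∃ v ∈ (Submodule.span ℝ {u})ᗮ,
        (fun x => x + v) '' (projHyp u '' Q) ⊆ projHyp u '' T) :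
    ∃ v₀ : EuclideanSpace ℝ (Fin n), (fun x => x + v₀) '' Q ⊆ T := by
  classical
  obtain ⟨p, hp, hTdef⟩ := hT
  obtain ⟨s, hcard, hQdef⟩ := hQ
  rcases s.eq_empty_or_nonempty with rfl | hs
  · exact ⟨0, by simp [hQdef]⟩
  obtain ⟨x₀, hx₀⟩ := hs
  -- index the vertices of `Q` by `Fin n`
  set e := s.equivFin with he
  set q : Fin n → EuclideanSpace ℝ (Fin n) := fun j =>
    if hj : (j : ℕ) < s.card then (e.symm ⟨j, hj⟩ : EuclideanSpace ℝ (Fin n)) else x₀ with hq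
  have hqmem : ∀ j, q j ∈ s := by
    intro j
    by_cases hj : (j : ℕ) < s.card
    · simp only [hq, dif_pos hj]; exact (e.symm ⟨j, hj⟩).2
    · simp only [hq, dif_neg hj]; exact hx₀
  have hrange : (↑s : Set (EuclideanSpace ℝ (Fin n))) = Set.range q := by
    apply Set.Subset.antisymm
    · intro x hx
      refine ⟨⟨(e ⟨x, hx⟩ : Fin s.card), lt_of_lt_of_le (e ⟨x, hx⟩).2 hcard⟩, ?_⟩
      simp only [hq]
      rw [dif_pos]
      · simp
      · exact (e ⟨x, hx⟩).2
    · rintro x ⟨j, rfl⟩; exact hqmem j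
  -- barycentric coordinates w.r.t. the simplex `T`
  have hspan : affineSpan ℝ (Set.range p) = ⊤ := by
    rw [hp.affineSpan_eq_top_iff_card_eq_finrank_add_one]
    simp [finrank_euclideanSpace_fin]
  set B : AffineBasis (Fin (n + 1)) ℝ (EuclideanSpace ℝ (Fin n)) := ⟨p, hp, hspan⟩ with hB
  have hmemT : ∀ x : EuclideanSpace ℝ (Fin n), x ∈ T ↔ ∀ i, 0 ≤ B.coord i x := by
    intro x
    have hr : Set.range (B : Fin (n + 1) → EuclideanSpace ℝ (Fin n)) = Set.range p := rfl
    rw [hTdef, ← hr, B.convexHull_eq_nonneg_coord]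
    rfl
  -- argmin for each coordinate
  have hargmin : ∀ i : Fin (n + 1), ∃ j : Fin n, ∀ j', B.coord i (q j) ≤ B.coord i (q j') := by
    intro i
    obtain ⟨j, -, hj⟩ := Finset.exists_min_image Finset.univ (fun j => B.coord i (q j))
      ⟨⟨0, hn⟩, Finset.mem_univ _⟩
    exact ⟨j, fun j' => hj j' (Finset.mem_univ _)⟩
  choose m hm using hargmin
  obtain ⟨a, b, hab, hmab⟩ := Fintype.exists_ne_map_eq_of_card_lt m (by simp)
  -- the edge direction
  set d : EuclideanSpace ℝ (Fin n) := p b - p a with hd'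
  have hd : d ≠ 0 := sub_ne_zero.mpr fun hh => hab (hp.injective hh.symm)
  set u : EuclideanSpace ℝ (Fin n) := ‖d‖⁻¹ • d with hu'
  have hu : ‖u‖ = 1 := norm_smul_inv_norm hd
  have hspanu : Submodule.span ℝ {u} = Submodule.span ℝ {d} :=
    Submodule.span_singleton_smul_eq
      (isUnit_iff_ne_zero.mpr (inv_ne_zero (norm_ne_zero_iff.mpr hd))) d
  obtain ⟨v, hv, hsub⟩ := h u hu
  -- affine coordinate computations
  have hco : ∀ (i : Fin (n + 1)) (x : EuclideanSpace ℝ (Fin n)) (c : ℝ),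
      B.coord i (x + c • d) = B.coord i x + c * (B.coord i (p b) - B.coord i (p a)) := by
    intro i x c
    have h1 : B.coord i (c • d +ᵥ x) = (B.coord i).linear (c • d) +ᵥ B.coord i x :=
      (B.coord i).map_vadd x (c • d)
    have h2 : (B.coord i).linear d = B.coord i (p b) - B.coord i (p a) := by
      have h2' := (B.coord i).linearMap_vsub (p b) (p a)
      simpa [vsub_eq_sub, hd'] using h2'
    have h3 : (B.coord i).linear (c • d) = c * (B.coord i (p b) - B.coord i (p a)) := by
      rw [map_smul, h2]
      simp [smul_eq_mul]
    have h4 : x + c • d = c • d +ᵥ x := by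
      rw [vadd_eq_add, add_comm]
    rw [h4, h1, vadd_eq_add, h3]
    ring
  have hcov : ∀ (i : Fin (n + 1)) (x : EuclideanSpace ℝ (Fin n)),
      B.coord i (x + v) = B.coord i x + (B.coord i).linear v := by
    intro i x
    have h1 : B.coord i (v +ᵥ x) = (B.coord i).linear v +ᵥ B.coord i x :=
      (B.coord i).map_vadd x v
    rw [vadd_eq_add, vadd_eq_add] at h1
    rw [add_comm x v, h1]; ring
  have hBp : (B : Fin (n + 1) → EuclideanSpace ℝ (Fin n)) = p := rfl
  have hcoord : ∀ i j : Fin (n + 1), B.coord i (p j) = if i = j then 1 else 0 := by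
    intro i j
    have hc := B.coord_apply i j
    rwa [hBp] at hc
  have hcpa : B.coord a (p a) = 1 := by rw [hcoord, if_pos rfl]
  have hcpb : B.coord b (p b) = 1 := by rw [hcoord, if_pos rfl]
  have hcab : B.coord a (p b) = 0 := by rw [hcoord, if_neg hab]
  have hcba : B.coord b (p a) = 0 := by rw [hcoord, if_neg (Ne.symm hab)]
  -- from the shadow hypothesis: each vertex of Q can be lifted into T along d
  have hlift : ∀ j : Fin n, ∃ t : ℝ, q j + v + t • d ∈ T := by
    intro j
    have hqQ : q j ∈ Q := by
      rw [hQdef]; exact subset_convexHull ℝ _ (by exact_mod_cast hqmem j)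
    have hproj : projHyp u (q j) + v ∈ (fun x => x + v) '' (projHyp u '' Q) :=
      ⟨projHyp u (q j), ⟨q j, hqQ, rfl⟩, rfl⟩
    obtain ⟨x, hxT, hy'⟩ := hsub hproj
    have hvproj : projHyp u v = v := by
      exact
        (Submodule.starProjection_eq_self_iff (K := (Submodule.span ℝ {u})ᗮ)).mpr hv
    have hadd : projHyp u (q j + v) = projHyp u (q j) + v := by
      simp only [projHyp, projSub] at hvproj ⊢
      rw [map_add]
      push_cast
      rw [hvproj]
    have hker : (q j + v) - x ∈ Submodule.span ℝ {u} := by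
      have h1 : (q j + v) - projHyp u (q j + v) ∈ ((Submodule.span ℝ {u})ᗮ)ᗮ :=
        Submodule.sub_starProjection_mem_orthogonal (K := (Submodule.span ℝ {u})ᗮ) _
      have h2 : x - projHyp u x ∈ ((Submodule.span ℝ {u})ᗮ)ᗮ :=
        Submodule.sub_starProjection_mem_orthogonal (K := (Submodule.span ℝ {u})ᗮ) _
      have h3 : (q j + v) - x ∈ ((Submodule.span ℝ {u})ᗮ)ᗮ := by
        have h4 := Submodule.sub_mem _ h1 h2
        have heq : (q j + v) - projHyp u (q j + v) - (x - projHyp u x) = (q j + v) - x := by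
          rw [hadd, hy']; abel
        rwa [heq] at h4
      rwa [Submodule.orthogonal_orthogonal] at h3
    rw [hspanu, Submodule.mem_span_singleton] at hker
    obtain ⟨c, hc⟩ := hker
    refine ⟨-c, ?_⟩
    have heq2 : q j + v + (-c) • d = x := by
      have hc' : c • d = q j + v - x := hc
      rw [neg_smul, hc']; abel
    rwa [heq2]
  choose t ht using hlift
  -- coordinates of the lifted points are nonnegative
  have hpos : ∀ (j : Fin n) (i : Fin (n + 1)),
      0 ≤ B.coord i (q j + v) + t j * (B.coord i (p b) - B.coord i (p a)) := by
    intro j i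
    have hp' := (hmemT _).mp (ht j) i
    rwa [hco i (q j + v) (t j)] at hp'
  -- the translation
  set j₀ : Fin n := m a with hj₀
  set t₀ : ℝ := B.coord a (q j₀ + v) with ht₀
  refine ⟨v + t₀ • d, ?_⟩
  -- key sum inequality at j₀
  have hsum : 0 ≤ B.coord a (q j₀ + v) + B.coord b (q j₀ + v) := by
    have ha' := hpos j₀ a
    have hb' := hpos j₀ b
    rw [hcab, hcpa] at ha'
    rw [hcpb, hcba] at hb'
    nlinarith [ha', hb']
  -- every translated vertex lies in T
  have hvert : ∀ j : Fin n, q j + (v + t₀ • d) ∈ T := by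
    intro j
    rw [hmemT]
    intro i
    have hrw : q j + (v + t₀ • d) = (q j + v) + t₀ • d := by abel
    rw [hrw, hco i (q j + v) t₀]
    by_cases hia : i = a
    · subst hia
      rw [hcab, hcpa]
      have hmin : B.coord i (q j₀ + v) ≤ B.coord i (q j + v) := by
        rw [hcov, hcov]
        have hm' := hm i j
        simpa [hj₀] using add_le_add_right hm' ((B.coord i).linear v)
      simp only [ht₀]
      nlinarith [hmin]
    by_cases hib : i = b
    · subst hib
      rw [hcpb, hcba]
      have hmin : B.coord i (q j₀ + v) ≤ B.coord i (q j + v) := by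
        rw [hcov, hcov]
        have h1 : m i = j₀ := by rw [← hmab, hj₀]
        have hm' := hm i j
        rw [h1] at hm'
        simpa using add_le_add_right hm' ((B.coord i).linear v)
      simp only [ht₀] at hsum ⊢
      nlinarith [hmin, hsum]
    · have hz : B.coord i (p b) - B.coord i (p a) = 0 := by
        rw [hcoord, hcoord, if_neg hib, if_neg hia, sub_zero]
      rw [hz, mul_zero, add_zero]
      have hp' := hpos j i
      rwa [hz, mul_zero, add_zero] at hp'
  -- conclude by convexity
  rintro x ⟨y, hyQ, rfl⟩
  have hTc : Convex ℝ T := hTdef ▸ convex_convexHull ℝ _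
  have hsubset : Q ⊆ (fun z => z + (v + t₀ • d)) ⁻¹' T := by
    rw [hQdef, hrange]
    apply convexHull_min
    · rintro z ⟨j, rfl⟩
      exact hvert j
    · exact hTc.translate_preimage_left _
  exact hsubset hyQ
end

section
/- Let K and L be nonempty compact convex sets in ℝⁿ, n ≥ 2. Suppose that for all points x₀, x₁, x₂ ∈ K there exists v ∈ ℝⁿ such that the convex hull of {x₀, x₁, x₂} translated by v is contained in L (i.e., every triangle inside K can be translated inside L). If K and L have the same mean width, i.e., ∫_{S^{n-1}} h_K(u) du = ∫_{S^{n-1}} h_L(u) du where h_K(v) = sup_{x ∈ K} x·v is the support function and the integral is over the unit sphere with its surface measure, then K and L are translates: there exists v₀ ∈ ℝⁿ with L = K + v₀. -/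
open Set

section Aux
open Set MeasureTheory Module Metric
open scoped NNReal ENNReal
set_option linter.unusedSectionVars false
set_option maxHeartbeats 1000000



noncomputable def sf {E : Type*} [NormedAddCommGroup E] [InnerProductSpace ℝ E]
    (K : Set E) (u : E) : ℝ := sSup ((fun x => (inner ℝ x u : ℝ)) '' K)

section sfLemmas
variable {E : Type*} [NormedAddCommGroup E] [InnerProductSpace ℝ E]
variable {K : Set E}

theorem sf_cont_aux (u : E) : Continuous (fun x : E => (inner ℝ x u : ℝ)) :=
  continuous_inner.comp (continuous_id.prodMk continuous_const)

theorem le_sf (hK : IsCompact K) {x : E} (hx : x ∈ K) (u : E) :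
    (inner ℝ x u : ℝ) ≤ sf K u :=
  le_csSup ((hK.image (sf_cont_aux u)).bddAbove) ⟨x, hx, rfl⟩

theorem sf_le (hK : K.Nonempty) {u : E} {c : ℝ} (h : ∀ x ∈ K, (inner ℝ x u : ℝ) ≤ c) :
    sf K u ≤ c :=
  csSup_le (hK.image _) (by rintro y ⟨x, hx, rfl⟩; exact h x hx)

theorem exists_sf_eq (hKne : K.Nonempty) (hK : IsCompact K) (u : E) :
    ∃ x ∈ K, (inner ℝ x u : ℝ) = sf K u := by
  obtain ⟨x, hx, hmax⟩ := hK.exists_isMaxOn hKne (sf_cont_aux u).continuousOn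
  exact ⟨x, hx, le_antisymm (le_sf hK hx u) (sf_le hKne fun y hy => hmax hy)⟩

theorem sf_zero (hKne : K.Nonempty) : sf K 0 = 0 := by
  have : (fun x : E => (inner ℝ x (0:E) : ℝ)) '' K = {0} := by
    apply Subset.antisymm
    · rintro y ⟨x, hx, rfl⟩; simp
    · rintro y hy; rcases hKne with ⟨x, hx⟩
      exact ⟨x, hx, by simp [Set.eq_of_mem_singleton hy]⟩
  rw [sf, this]
  exact csSup_singleton 0

theorem sf_smul (hKne : K.Nonempty) (hK : IsCompact K) {c : ℝ} (hc : 0 ≤ c) (u : E) :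
    sf K (c • u) = c * sf K u := by
  rcases hc.eq_or_lt with rfl | hc
  · simp [sf_zero hKne]
  obtain ⟨x, hx, hxe⟩ := exists_sf_eq hKne hK u
  obtain ⟨y, hy, hye⟩ := exists_sf_eq hKne hK (c • u)
  apply le_antisymm
  · rw [← hye, real_inner_smul_right]
    exact mul_le_mul_of_nonneg_left (le_sf hK hy u) hc.le
  · rw [← hxe, ← real_inner_smul_right]
    exact le_sf hK hx (c • u)

theorem sf_lipschitz (hKne : K.Nonempty) (hK : IsCompact K) {R : ℝ}
    (hR : ∀ x ∈ K, ‖x‖ ≤ R) (u v : E) :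
    sf K u - sf K v ≤ R * ‖u - v‖ := by
  obtain ⟨x, hx, hxe⟩ := exists_sf_eq hKne hK u
  have h1 : (inner ℝ x (u - v) : ℝ) ≤ R * ‖u - v‖ := by
    calc (inner ℝ x (u - v) : ℝ) ≤ ‖x‖ * ‖u - v‖ := real_inner_le_norm _ _
    _ ≤ R * ‖u - v‖ := by
        apply mul_le_mul_of_nonneg_right (hR x hx) (norm_nonneg _)
  have h2 : (inner ℝ x u : ℝ) = inner ℝ x v + inner ℝ x (u - v) := by
    rw [← inner_add_right]; congr 1; abel
  have := le_sf hK hx v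
  linarith [hxe, h2, h1, this]

theorem sf_continuous (hKne : K.Nonempty) (hK : IsCompact K) : Continuous (sf K) := by
  obtain ⟨R, hR0, hR⟩ : ∃ R, 0 ≤ R ∧ ∀ x ∈ K, ‖x‖ ≤ R := by
    obtain ⟨R, hR⟩ := hK.isBounded.exists_norm_le
    exact ⟨max R 0, le_max_right _ _, fun x hx => le_trans (hR x hx) (le_max_left _ _)⟩
  have : LipschitzWith (Real.toNNReal R) (sf K) := by
    apply LipschitzWith.of_dist_le_mul
    intro u v
    rw [Real.dist_eq, abs_sub_le_iff]
    constructor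
    · simpa [Real.coe_toNNReal R hR0, dist_eq_norm] using sf_lipschitz hKne hK hR u v
    · simpa [Real.coe_toNNReal R hR0, dist_eq_norm, norm_sub_rev u v] using
        sf_lipschitz hKne hK hR v u
  exact this.continuous

end sfLemmas



section sfLemmas
variable {E : Type*} [NormedAddCommGroup E] [InnerProductSpace ℝ E] [CompleteSpace E]
variable {K L : Set E}

theorem le_sf' (hK : IsCompact K) {x : E} (hx : x ∈ K) (u : E) :
    (inner ℝ x u : ℝ) ≤ sf K u :=
  le_csSup ((hK.image (continuous_inner.comp (continuous_id.prodMk continuous_const))).bddAbove)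
    ⟨x, hx, rfl⟩

theorem sf_le' (hK : K.Nonempty) {u : E} {c : ℝ} (h : ∀ x ∈ K, (inner ℝ x u : ℝ) ≤ c) :
    sf K u ≤ c :=
  csSup_le (hK.image _) (by rintro y ⟨x, hx, rfl⟩; exact h x hx)

/-- a point satisfying all support inequalities of a compact convex set lies in it -/
theorem mem_of_forall_inner_le (hKcp : IsCompact K) (hKcv : Convex ℝ K) (hKne : K.Nonempty)
    {x : E} (h : ∀ u : E, (inner ℝ x u : ℝ) ≤ sf K u) : x ∈ K := by
  by_contra hx
  obtain ⟨f, s, hfK, hfx⟩ := geometric_hahn_banach_closed_point hKcv hKcp.isClosed hx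
  set v := (InnerProductSpace.toDual ℝ E).symm f with hv
  have hfv : ∀ y : E, f y = (inner ℝ v y : ℝ) := fun y =>
    (InnerProductSpace.toDual_symm_apply).symm
  have h1 : sf K v ≤ s := sf_le' hKne fun y hy => by
    rw [real_inner_comm, ← hfv]; exact (hfK y hy).le
  have h2 := h v
  rw [real_inner_comm, ← hfv] at h2
  linarith

theorem eq_of_sf_eq (hKcp : IsCompact K) (hKcv : Convex ℝ K) (hKne : K.Nonempty)
    (hLcp : IsCompact L) (hLcv : Convex ℝ L) (hLne : L.Nonempty)
    (h : ∀ u, sf K u = sf L u) : K = L := by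
  apply Subset.antisymm
  · intro x hx
    exact mem_of_forall_inner_le hLcp hLcv hLne fun u => (h u) ▸ le_sf' hKcp hx u
  · intro x hx
    exact mem_of_forall_inner_le hKcp hKcv hKne fun u => (h u).symm ▸ le_sf' hLcp hx u

theorem sf_translate (hKcp : IsCompact K) (hKne : K.Nonempty) (v u : E) :
    sf ((fun x => x + v) '' K) u = sf K u + (inner ℝ v u : ℝ) := by
  apply le_antisymm
  · apply sf_le' (hKne.image _)
    rintro y ⟨x, hx, rfl⟩
    rw [inner_add_left]
    linarith [le_sf' hKcp hx u]
  · obtain ⟨x, hx, hmax⟩ := hKcp.exists_isMaxOn hKne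
      (continuous_inner.comp (continuous_id.prodMk continuous_const)).continuousOn (f := fun x : E => (inner ℝ x u : ℝ))
    have h1 : sf K u ≤ (inner ℝ x u : ℝ) := sf_le' hKne fun y hy => hmax hy
    have h2 : (inner ℝ (x + v) u : ℝ) ≤ sf ((fun x => x + v) '' K) u :=
      le_sf' (hKcp.image (continuous_add_right v)) ⟨x, hx, rfl⟩ u
    rw [inner_add_left] at h2
    linarith

end sfLemmas


variable {E : Type*} [NormedAddCommGroup E] [InnerProductSpace ℝ E] [FiniteDimensional ℝ E]
  [MeasurableSpace E] [BorelSpace E]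

theorem cap_pos {m : ℕ} (hrank : finrank ℝ E = m + 1) {U : Set E} (hU : IsOpen U)
    {u₀ : E} (hu₀S : ‖u₀‖ = 1) (hu₀U : u₀ ∈ U) :
    0 < μH[(m : ℝ)] (sphere (0 : E) 1 ∩ U) := by
  haveI : Fact (finrank ℝ E = m + 1) := ⟨hrank⟩
  have hu₀ : u₀ ≠ 0 := by intro h; rw [h, norm_zero] at hu₀S; norm_num at hu₀S
  set V := (ℝ ∙ u₀)ᗮ with hV
  have hVrank : finrank ℝ V = m := Submodule.finrank_orthogonal_span_singleton hu₀
  set π : E → E := fun x => (V.orthogonalProjectionOnto x : E) with hπ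
  have hπlip : LipschitzWith 1 π := by
    apply LipschitzWith.of_dist_le_mul
    intro x y
    have : π x - π y = (V.orthogonalProjectionOnto (x - y) : E) := by
      simp [hπ, map_sub]
    rw [dist_eq_norm, dist_eq_norm, this]
    calc (‖(V.orthogonalProjectionOnto (x - y) : E)‖ : ℝ) = ‖V.orthogonalProjectionOnto (x - y)‖ := by
          rw [Submodule.norm_coe]
      _ ≤ ‖V.orthogonalProjectionOnto‖ * ‖x - y‖ := (V.orthogonalProjectionOnto).le_opNorm _
      _ ≤ 1 * ‖x - y‖ := by
          apply mul_le_mul_of_nonneg_right (Submodule.orthogonalProjectionOnto_norm_le V) (norm_nonneg _)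
  set c : V → E := fun w => (w : E) + Real.sqrt (1 - ‖w‖ ^ 2) • u₀ with hc
  have hccont : Continuous c := by
    apply Continuous.add continuous_subtype_val
    exact (Real.continuous_sqrt.comp (by continuity)).smul continuous_const
  have hc0 : c 0 = u₀ := by simp [hc]
  obtain ⟨δ, hδ, hδU⟩ : ∃ δ > 0, Metric.ball (0 : V) δ ⊆ c ⁻¹' U := by
    have : c ⁻¹' U ∈ nhds (0 : V) := by
      apply hccont.continuousAt.preimage_mem_nhds
      rw [hc0]; exact hU.mem_nhds hu₀U
    exact Metric.mem_nhds_iff.1 this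
  set δ' := min δ 1 with hδ'
  have hδ'pos : 0 < δ' := lt_min hδ one_pos
  set B : Set V := Metric.ball 0 δ' with hB
  have hwV : ∀ w : V, (inner ℝ (w : E) u₀ : ℝ) = 0 := by
    intro w
    have h2 := (Submodule.mem_orthogonal (ℝ ∙ u₀) (w : E)).1 w.2 u₀
      (Submodule.mem_span_singleton_self u₀)
    rwa [real_inner_comm] at h2
  have hcS : ∀ w ∈ B, c w ∈ sphere (0 : E) 1 ∩ U := by
    intro w hw
    have hwδ' : ‖w‖ < δ' := by simpa using mem_ball_zero_iff.1 hw
    have hwn : ‖w‖ < 1 := lt_of_lt_of_le hwδ' (min_le_right δ 1)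
    have hw1 : (0:ℝ) ≤ 1 - ‖w‖ ^ 2 := by nlinarith [norm_nonneg (w : V)]
    constructor
    · rw [mem_sphere_zero_iff_norm]
      have hsq : ‖c w‖ ^ 2 = 1 := by
        rw [hc]
        rw [norm_add_sq_real]
        rw [norm_smul, inner_smul_right, hwV w, Submodule.norm_coe]
        rw [Real.norm_eq_abs, abs_of_nonneg (Real.sqrt_nonneg _), mul_pow,
          Real.sq_sqrt hw1, hu₀S]
        ring
      calc ‖c w‖ = Real.sqrt (‖c w‖ ^ 2) := (Real.sqrt_sq (norm_nonneg _)).symm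
        _ = 1 := by rw [hsq, Real.sqrt_one]
    · apply hδU
      have hwδ' : ‖w‖ < δ' := by simpa using mem_ball_zero_iff.1 hw
      exact mem_ball_zero_iff.2 (lt_of_lt_of_le hwδ' (min_le_left δ 1))
  have hπc : ∀ w : V, π (c w) = (w : E) := by
    intro w
    have h1 : V.orthogonalProjectionOnto (w : E) = w :=
      Submodule.orthogonalProjectionOnto_mem_subspace_eq_self w
    have h2 : V.orthogonalProjectionOnto u₀ = 0 :=
      Submodule.orthogonalProjectionOnto_apply_of_mem_orthogonal
        (Submodule.le_orthogonal_orthogonal _ (Submodule.mem_span_singleton_self u₀))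
    simp [hπ, hc, map_add, _root_.map_smul, h1, h2]
    right
    simp only [Submodule.starProjection_apply, h2, Submodule.coe_zero]
  have hsub : (Subtype.val : V → E) '' B ⊆ π '' (sphere (0 : E) 1 ∩ U) := by
    rintro x ⟨w, hw, rfl⟩
    exact ⟨c w, hcS w hw, hπc w⟩
  have heq : μH[(m:ℝ)] ((Subtype.val : V → E) '' B) = μH[(m:ℝ)] B :=
    (isometry_subtype_coe).hausdorffMeasure_image
      (Or.inl (by positivity : (0:ℝ) ≤ (m:ℝ))) B
  have h0 : 0 < μH[(m:ℝ)] ((Subtype.val : V → E) '' B) := by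
    rw [heq]
    have : 0 < μH[(finrank ℝ V : ℝ)] B := Metric.isOpen_ball.measure_pos _
      ⟨0, Metric.mem_ball_self hδ'pos⟩
    rwa [hVrank] at this
  have h1 := hπlip.hausdorffMeasure_image_le (by positivity : (0:ℝ) ≤ (m:ℝ))
    (sphere (0 : E) 1 ∩ U)
  simp only [ENNReal.coe_one, ENNReal.one_rpow, one_mul] at h1
  have h2 : μH[(m:ℝ)] ((Subtype.val : V → E) '' B) ≤
      μH[(m:ℝ)] (π '' (sphere (0 : E) 1 ∩ U)) := measure_mono hsub
  exact lt_of_lt_of_le h0 (le_trans h2 h1)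



-- radial map Lipschitz
theorem radial_lip {F : Type*} [NormedAddCommGroup F] [InnerProductSpace ℝ F] :
    LipschitzOnWith 2 (fun x : F => ‖x‖⁻¹ • x) {x : F | 1 ≤ ‖x‖} := by
  apply LipschitzOnWith.of_dist_le_mul
  intro x hx y hy
  have hx1 : (1:ℝ) ≤ ‖x‖ := hx
  have hy1 : (1:ℝ) ≤ ‖y‖ := hy
  have hxpos : (0:ℝ) < ‖x‖ := lt_of_lt_of_le one_pos hx1
  have hypos : (0:ℝ) < ‖y‖ := lt_of_lt_of_le one_pos hy1
  rw [dist_eq_norm, dist_eq_norm]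
  have key : ‖x‖⁻¹ • x - ‖y‖⁻¹ • y = ‖x‖⁻¹ • (x - y) + (‖x‖⁻¹ - ‖y‖⁻¹) • y := by
    rw [smul_sub, sub_smul]
    abel
  rw [key]
  have h1 : ‖‖x‖⁻¹ • (x - y)‖ ≤ ‖x - y‖ := by
    rw [norm_smul, Real.norm_eq_abs, abs_of_nonneg (by positivity)]
    calc ‖x‖⁻¹ * ‖x - y‖ ≤ 1 * ‖x - y‖ := by
          apply mul_le_mul_of_nonneg_right _ (norm_nonneg _)
          rw [inv_le_one_iff₀]; right; exact hx1
      _ = ‖x - y‖ := one_mul _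
  have h2 : ‖(‖x‖⁻¹ - ‖y‖⁻¹) • y‖ ≤ ‖x - y‖ := by
    rw [norm_smul, Real.norm_eq_abs]
    have habs : |‖x‖⁻¹ - ‖y‖⁻¹| = |‖y‖ - ‖x‖| / (‖x‖ * ‖y‖) := by
      rw [show ‖x‖⁻¹ - ‖y‖⁻¹ = (‖y‖ - ‖x‖) / (‖x‖ * ‖y‖) by field_simp,
        abs_div, abs_of_pos (mul_pos hxpos hypos)]
    rw [habs]
    have hyx : |‖y‖ - ‖x‖| ≤ ‖x - y‖ := by
      rw [abs_sub_comm]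
      exact abs_norm_sub_norm_le x y
    calc |‖y‖ - ‖x‖| / (‖x‖ * ‖y‖) * ‖y‖ = |‖y‖ - ‖x‖| / ‖x‖ := by
          field_simp
      _ ≤ ‖x - y‖ / ‖x‖ := by gcongr
      _ ≤ ‖x - y‖ / 1 := by gcongr
      _ = ‖x - y‖ := div_one _
  calc ‖‖x‖⁻¹ • (x - y) + (‖x‖⁻¹ - ‖y‖⁻¹) • y‖
      ≤ ‖‖x‖⁻¹ • (x - y)‖ + ‖(‖x‖⁻¹ - ‖y‖⁻¹) • y‖ := norm_add_le _ _
    _ ≤ ‖x - y‖ + ‖x - y‖ := add_le_add h1 h2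
    _ = 2 * ‖x - y‖ := by ring

namespace SphereFin

variable {n m : ℕ}

noncomputable def face (n : ℕ) (i : Fin n) (σ : ℝ) : Set (EuclideanSpace ℝ (Fin n)) :=
  {x | x i = σ ∧ ∀ j, |x j| ≤ 1}

theorem face_compact (i : Fin n) (σ : ℝ) : IsCompact (face n i σ) := by
  have hcd : ∀ j : Fin n, Continuous (fun x : EuclideanSpace ℝ (Fin n) => x j) :=
    fun j => (EuclideanSpace.proj j).continuous
  apply Metric.isCompact_of_isClosed_isBounded
  · have : face n i σ = {x : EuclideanSpace ℝ (Fin n) | x i = σ} ∩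
        ⋂ j, {x : EuclideanSpace ℝ (Fin n) | |x j| ≤ 1} := by
      ext x; simp [face, Set.mem_iInter]
    rw [this]
    apply IsClosed.inter
    · exact isClosed_eq (hcd i) continuous_const
    · exact isClosed_iInter fun j =>
        isClosed_le ((hcd j).abs) continuous_const
  · rw [isBounded_iff_forall_norm_le]
    refine ⟨Real.sqrt n, fun x hx => ?_⟩
    rw [EuclideanSpace.norm_eq]
    apply Real.sqrt_le_sqrt
    calc ∑ j, ‖x j‖ ^ 2 ≤ ∑ _j : Fin n, 1 := by
          apply Finset.sum_le_sum
          intro j _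
          have := hx.2 j
          rw [Real.norm_eq_abs]
          nlinarith [abs_nonneg (x j)]
      _ = n := by simp

theorem face_measure_lt_top (h : n = m + 1) (i : Fin n) (σ : ℝ) :
    μH[(m : ℝ)] (face n i σ) < ⊤ := by
  classical
  set e : EuclideanSpace ℝ (Fin n) := EuclideanSpace.single i (1:ℝ) with he
  have hne : e ≠ 0 := by
    intro hcon
    have : (e : EuclideanSpace ℝ (Fin n)) i = 0 := by rw [hcon]; rfl
    rw [he] at this
    simp [EuclideanSpace.single_apply] at this
  haveI : Fact (finrank ℝ (EuclideanSpace ℝ (Fin n)) = m + 1) :=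
    ⟨by rw [finrank_euclideanSpace_fin, h]⟩
  set V := (ℝ ∙ e)ᗮ with hV
  have hVrank : finrank ℝ V = m := Submodule.finrank_orthogonal_span_singleton hne
  set G : Set (EuclideanSpace ℝ (Fin n)) := (fun x => x - σ • e) '' face n i σ with hG
  have hGV : G ⊆ (V : Set (EuclideanSpace ℝ (Fin n))) := by
    rintro _ ⟨x, hx, rfl⟩
    rw [SetLike.mem_coe, hV, Submodule.mem_orthogonal_singleton_iff_inner_right]
    rw [inner_sub_right, real_inner_smul_right, he, EuclideanSpace.inner_single_left,
      EuclideanSpace.inner_single_left]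
    simp [hx.1]
  have hGcp : IsCompact G := (face_compact i σ).image (continuous_sub_right _)
  have hμeq : μH[(m : ℝ)] (face n i σ) = μH[(m : ℝ)] G := by
    rw [hG]
    exact ((IsometryEquiv.subRight (σ • e)).hausdorffMeasure_image _ _).symm
  rw [hμeq]
  -- transfer to the subtype V
  set G' : Set V := (Subtype.val : V → EuclideanSpace ℝ (Fin n)) ⁻¹' G with hG'
  have hGeq : (Subtype.val : V → EuclideanSpace ℝ (Fin n)) '' G' = G := by
    rw [hG', Set.image_preimage_eq_inter_range, Subtype.range_coe]
    exact Set.inter_eq_self_of_subset_left hGV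
  have hG'cp : IsCompact G' := by
    apply Metric.isCompact_of_isClosed_isBounded
    · exact hGcp.isClosed.preimage continuous_subtype_val
    · obtain ⟨R, hR⟩ := hGcp.isBounded.exists_norm_le
      rw [isBounded_iff_forall_norm_le]
      exact ⟨R, fun w hw => by simpa using hR _ hw⟩
  have := hG'cp.measure_lt_top (μ := μH[(finrank ℝ V : ℝ)])
  rw [hVrank] at this
  calc μH[(m : ℝ)] G = μH[(m : ℝ)] G' := by
        rw [← hGeq]
        exact (isometry_subtype_coe).hausdorffMeasure_image
          (Or.inl (by positivity : (0:ℝ) ≤ (m:ℝ))) G'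
    _ < ⊤ := this

end SphereFin

namespace SphereFin
variable {n m : ℕ}

noncomputable def A (n : ℕ) : Set (EuclideanSpace ℝ (Fin n)) :=
  ⋃ i : Fin n, (face n i 1 ∪ face n i (-1))

theorem A_norm_ge (x : EuclideanSpace ℝ (Fin n)) (hx : x ∈ A n) : 1 ≤ ‖x‖ := by
  obtain ⟨i, hi⟩ : ∃ i : Fin n, |x i| = 1 := by
    rcases Set.mem_iUnion.1 hx with ⟨i, hi⟩
    rcases hi with h | h
    · exact ⟨i, by rw [h.1]; norm_num⟩
    · exact ⟨i, by rw [h.1]; norm_num⟩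
  have h1 : |(inner ℝ (EuclideanSpace.single i (1:ℝ)) x : ℝ)| ≤ ‖EuclideanSpace.single i (1:ℝ)‖ * ‖x‖ :=
    abs_real_inner_le_norm _ _
  rw [EuclideanSpace.inner_single_left] at h1
  rw [EuclideanSpace.norm_single] at h1
  simpa [hi] using h1

theorem sphere_subset_rA (hn : 0 < n) :
    Metric.sphere (0 : EuclideanSpace ℝ (Fin n)) 1 ⊆ (fun x => ‖x‖⁻¹ • x) '' A n := by
  intro u hu
  have hu1 : ‖u‖ = 1 := by simpa using mem_sphere_zero_iff_norm.1 hu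
  haveI : Nonempty (Fin n) := ⟨⟨0, hn⟩⟩
  obtain ⟨i, -, hi⟩ := Finset.exists_max_image (Finset.univ : Finset (Fin n))
    (fun j => |u j|) ⟨⟨0, hn⟩, Finset.mem_univ _⟩
  have hine : u i ≠ 0 := by
    intro hcon
    have hzero : u = 0 := by
      ext j
      have := hi j (Finset.mem_univ j)
      rw [hcon] at this
      simp only [abs_zero] at this
      exact abs_nonpos_iff.1 (by simpa using this)
    rw [hzero, norm_zero] at hu1
    norm_num at hu1
  have habspos : 0 < |u i| := abs_pos.2 hine
  set x : EuclideanSpace ℝ (Fin n) := |u i|⁻¹ • u with hxdef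
  have hxA : x ∈ A n := by
    apply Set.mem_iUnion.2
    refine ⟨i, ?_⟩
    rcases lt_or_gt_of_ne hine with hneg | hpos
    · right
      constructor
      · show |u i|⁻¹ * u i = -1
        rw [abs_of_neg hneg]
        field_simp
      · intro j
        show |(|u i|⁻¹ * u j)| ≤ 1
        rw [abs_mul, abs_of_nonneg (by positivity : (0:ℝ) ≤ |u i|⁻¹)]
        rw [inv_mul_le_iff₀ habspos, mul_one]
        exact hi j (Finset.mem_univ j)
    · left
      constructor
      · show |u i|⁻¹ * u i = 1
        rw [abs_of_pos hpos]
        field_simp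
      · intro j
        show |(|u i|⁻¹ * u j)| ≤ 1
        rw [abs_mul, abs_of_nonneg (by positivity : (0:ℝ) ≤ |u i|⁻¹)]
        rw [inv_mul_le_iff₀ habspos, mul_one]
        exact hi j (Finset.mem_univ j)
  refine ⟨x, hxA, ?_⟩
  have hxnorm : ‖x‖ = |u i|⁻¹ := by
    rw [hxdef, norm_smul, Real.norm_eq_abs, abs_of_nonneg (by positivity : (0:ℝ) ≤ |u i|⁻¹),
      hu1, mul_one]
  show ‖x‖⁻¹ • x = u
  rw [hxnorm, hxdef, inv_inv, smul_smul, mul_inv_cancel₀ habspos.ne', one_smul]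

theorem sphere_measure_lt_top (h : n = m + 1) :
    μH[(m : ℝ)] (Metric.sphere (0 : EuclideanSpace ℝ (Fin n)) 1) < ⊤ := by
  have hApos : 0 < n := by omega
  have hlip := radial_lip (F := EuclideanSpace ℝ (Fin n))
  have hAsub : A n ⊆ {x : EuclideanSpace ℝ (Fin n) | 1 ≤ ‖x‖} := fun x hx => A_norm_ge x hx
  have hAfin : μH[(m : ℝ)] (A n) < ⊤ := by
    apply lt_of_le_of_lt (measure_iUnion_le _)
    rw [tsum_fintype]
    apply ENNReal.sum_lt_top.2
    intro i _
    apply lt_of_le_of_lt (measure_union_le _ _)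
    exact ENNReal.add_lt_top.2 ⟨face_measure_lt_top h i 1, face_measure_lt_top h i (-1)⟩
  calc μH[(m : ℝ)] (Metric.sphere (0 : EuclideanSpace ℝ (Fin n)) 1)
      ≤ μH[(m : ℝ)] ((fun x => ‖x‖⁻¹ • x) '' A n) := measure_mono (sphere_subset_rA hApos)
    _ ≤ ((2:ℝ≥0) : ℝ≥0∞) ^ (m:ℝ) * μH[(m : ℝ)] (A n) :=
        (hlip.mono hAsub).hausdorffMeasure_image_le (by positivity : (0:ℝ) ≤ (m:ℝ))
    _ < ⊤ := ENNReal.mul_lt_top (by rw [ENNReal.rpow_natCast]; exact ENNReal.pow_lt_top (by norm_num)) hAfin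

end SphereFin


variable {E : Type*} [NormedAddCommGroup E] [InnerProductSpace ℝ E]
  [MeasurableSpace E] [BorelSpace E]

theorem setIntegral_sphere_neg (d : ℝ) (f : E → ℝ) :
    ∫ u in sphere (0 : E) 1, f (-u) ∂μH[d] = ∫ u in sphere (0 : E) 1, f u ∂μH[d] := by
  have hmp : MeasurePreserving (fun u : E => -u) μH[d] μH[d] :=
    (IsometryEquiv.neg E).measurePreserving_hausdorffMeasure d
  have hse : MeasurableEmbedding (fun u : E => -u) :=
    (Homeomorph.neg E).measurableEmbedding
  have hS : (fun u : E => -u) ⁻¹' (sphere (0 : E) 1) = sphere (0 : E) 1 := by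
    ext x
    simp [mem_sphere_zero_iff_norm]
  conv_lhs => rw [← hS]
  exact hmp.setIntegral_preimage_emb hse f (sphere (0 : E) 1)

theorem integrableOn_sphere [FiniteDimensional ℝ E] {d : ℝ} {f : E → ℝ} (hf : Continuous f)
    (hfin : μH[d] (sphere (0 : E) 1) < ⊤) :
    IntegrableOn f (sphere (0 : E) 1) μH[d] := by
  haveI : IsFiniteMeasure (μH[d].restrict (sphere (0 : E) 1)) :=
    ⟨by rw [Measure.restrict_apply_univ]; exact hfin⟩
  obtain ⟨C, hC⟩ := (isCompact_sphere (0 : E) 1).exists_bound_of_continuousOn hf.continuousOn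
  apply Integrable.mono' (integrable_const C) hf.aestronglyMeasurable.restrict
  refine (ae_restrict_iff' (isClosed_sphere.measurableSet)).2 ?_
  exact Filter.Eventually.of_forall fun x hx => hC x hx

theorem vanish_on_sphere [FiniteDimensional ℝ E] {m : ℕ} (hrank : finrank ℝ E = m + 1)
    {f : E → ℝ} (hf : Continuous f) (hpos : ∀ u ∈ sphere (0 : E) 1, 0 ≤ f u)
    (hfin : μH[(m : ℝ)] (sphere (0 : E) 1) < ⊤)
    (hint : ∫ u in sphere (0 : E) 1, f u ∂μH[(m : ℝ)] = 0) :
    ∀ u ∈ sphere (0 : E) 1, f u = 0 := by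
  intro u₀ hu₀
  by_contra hne
  have hpos₀ : 0 < f u₀ := lt_of_le_of_ne (hpos u₀ hu₀) (Ne.symm hne)
  set U : Set E := f ⁻¹' (Set.Ioi (f u₀ / 2)) with hU
  have hUopen : IsOpen U := isOpen_Ioi.preimage hf
  have hu₀U : u₀ ∈ U := by
    rw [hU]
    simp only [Set.mem_preimage, Set.mem_Ioi]
    linarith
  have hcap : 0 < μH[(m : ℝ)] (sphere (0 : E) 1 ∩ U) :=
    cap_pos hrank hUopen (by simpa using mem_sphere_zero_iff_norm.1 hu₀) hu₀U
  have hSmeas : MeasurableSet (sphere (0 : E) 1) := isClosed_sphere.measurableSet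
  have hSU : MeasurableSet (sphere (0 : E) 1 ∩ U) := hSmeas.inter hUopen.measurableSet
  have hcapfin : μH[(m : ℝ)] (sphere (0 : E) 1 ∩ U) ≠ ⊤ :=
    (lt_of_le_of_lt (measure_mono Set.inter_subset_left) hfin).ne
  have hintf : IntegrableOn f (sphere (0 : E) 1) μH[(m : ℝ)] := integrableOn_sphere hf hfin
  have h1 : f u₀ / 2 * (μH[(m : ℝ)] (sphere (0 : E) 1 ∩ U)).toReal ≤
      ∫ u in sphere (0 : E) 1 ∩ U, f u ∂μH[(m : ℝ)] := by
    rw [mul_comm, ← measureReal_def, ← smul_eq_mul]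
    apply setIntegral_ge_of_const_le hSU hcapfin
    · intro x hx
      exact le_of_lt hx.2
    · exact hintf.mono_set Set.inter_subset_left
  have h2 : ∫ u in sphere (0 : E) 1 ∩ U, f u ∂μH[(m : ℝ)] ≤
      ∫ u in sphere (0 : E) 1, f u ∂μH[(m : ℝ)] := by
    apply setIntegral_mono_set hintf
    · exact (ae_restrict_iff' hSmeas).2 (Filter.Eventually.of_forall hpos)
    · exact HasSubset.Subset.eventuallyLE Set.inter_subset_left
  have h3 : 0 < f u₀ / 2 * (μH[(m : ℝ)] (sphere (0 : E) 1 ∩ U)).toReal := by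
    apply mul_pos (by linarith)
    exact ENNReal.toReal_pos hcap.ne' hcapfin
  rw [hint] at h2
  linarith

end Aux

open MeasureTheory in
/-- If every triangle in K translates into L and K, L have equal mean width,
then K and L are translates. -/
theorem stmt_8 {n : ℕ} (hn : 2 ≤ n) (K L : Set (EuclideanSpace ℝ (Fin n)))
    (hKne : K.Nonempty) (hKcp : IsCompact K) (hKcv : Convex ℝ K)
    (hLne : L.Nonempty) (hLcp : IsCompact L) (hLcv : Convex ℝ L)
    (htri : ∀ x₀ x₁ x₂ : EuclideanSpace ℝ (Fin n), x₀ ∈ K → x₁ ∈ K → x₂ ∈ K →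
      ∃ v : EuclideanSpace ℝ (Fin n),
        (fun x => x + v) '' (convexHull ℝ {x₀, x₁, x₂}) ⊆ L)
    (hW : ∫ u in Metric.sphere (0 : EuclideanSpace ℝ (Fin n)) 1,
            sSup ((fun x => (inner ℝ x u : ℝ)) '' K) ∂(μH[(n : ℝ) - 1]) =
          ∫ u in Metric.sphere (0 : EuclideanSpace ℝ (Fin n)) 1,
            sSup ((fun x => (inner ℝ x u : ℝ)) '' L) ∂(μH[(n : ℝ) - 1])) :
    ∃ v₀ : EuclideanSpace ℝ (Fin n), L = (fun x => x + v₀) '' K := by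
  classical
  have hfK : Continuous (sf K) := sf_continuous hKne hKcp
  have hfL : Continuous (sf L) := sf_continuous hLne hLcp
  have hK0 : sf K (0 : EuclideanSpace ℝ (Fin n)) = 0 := sf_zero hKne
  have hL0 : sf L (0 : EuclideanSpace ℝ (Fin n)) = 0 := sf_zero hLne
  -- three-point inequality
  have hsub3 : ∀ u₁ u₂ u₃ : EuclideanSpace ℝ (Fin n), u₁ + u₂ + u₃ = 0 →
      sf K u₁ + sf K u₂ + sf K u₃ ≤ sf L u₁ + sf L u₂ + sf L u₃ := by
    intro u₁ u₂ u₃ hsum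
    obtain ⟨x₁, hx₁, he₁⟩ := exists_sf_eq hKne hKcp u₁
    obtain ⟨x₂, hx₂, he₂⟩ := exists_sf_eq hKne hKcp u₂
    obtain ⟨x₃, hx₃, he₃⟩ := exists_sf_eq hKne hKcp u₃
    obtain ⟨v, hv⟩ := htri x₁ x₂ x₃ hx₁ hx₂ hx₃
    have hmem : ∀ x ∈ ({x₁, x₂, x₃} : Set (EuclideanSpace ℝ (Fin n))), x + v ∈ L := fun x hx =>
      hv (Set.mem_image_of_mem _ (subset_convexHull ℝ _ hx))
    have h₁ := le_sf' hLcp (hmem x₁ (by simp)) u₁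
    have h₂ := le_sf' hLcp (hmem x₂ (by simp)) u₂
    have h₃ := le_sf' hLcp (hmem x₃ (by simp)) u₃
    rw [inner_add_left] at h₁ h₂ h₃
    have hvsum : (inner ℝ v u₁ : ℝ) + inner ℝ v u₂ + inner ℝ v u₃ = 0 := by
      rw [← inner_add_right, ← inner_add_right, hsum, inner_zero_right]
    linarith
  -- width inequality
  have hwidth_le : ∀ u : EuclideanSpace ℝ (Fin n),
      sf K u + sf K (-u) ≤ sf L u + sf L (-u) := by
    intro u
    have := hsub3 u (-u) 0 (by abel)
    rw [hK0, hL0] at this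
    linarith
  -- measure bookkeeping
  obtain ⟨m, hm⟩ : ∃ m, n = m + 1 := ⟨n - 1, by omega⟩
  have hcast : (n : ℝ) - 1 = (m : ℝ) := by rw [hm]; push_cast; ring
  have hrank : Module.finrank ℝ (EuclideanSpace ℝ (Fin n)) = m + 1 := by
    rw [finrank_euclideanSpace_fin, hm]
  have hfin : μH[(m : ℝ)] (Metric.sphere (0 : EuclideanSpace ℝ (Fin n)) 1) < ⊤ :=
    SphereFin.sphere_measure_lt_top hm
  rw [hcast] at hW
  have hW' : ∫ u in Metric.sphere (0 : EuclideanSpace ℝ (Fin n)) 1, sf K u ∂μH[(m : ℝ)] =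
      ∫ u in Metric.sphere (0 : EuclideanSpace ℝ (Fin n)) 1, sf L u ∂μH[(m : ℝ)] := hW
  have hiK := integrableOn_sphere (E := EuclideanSpace ℝ (Fin n)) hfK hfin
  have hiL := integrableOn_sphere (E := EuclideanSpace ℝ (Fin n)) hfL hfin
  have hiKn := integrableOn_sphere (E := EuclideanSpace ℝ (Fin n))
    (f := fun u => sf K (-u)) (hfK.comp continuous_neg) hfin
  have hiLn := integrableOn_sphere (E := EuclideanSpace ℝ (Fin n))
    (f := fun u => sf L (-u)) (hfL.comp continuous_neg) hfin
  have hwcont : Continuous (fun u : EuclideanSpace ℝ (Fin n) =>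
      (sf L u + sf L (-u)) - (sf K u + sf K (-u))) :=
    ((hfL.add (hfL.comp continuous_neg)).sub (hfK.add (hfK.comp continuous_neg)))
  have hwint : ∫ u in Metric.sphere (0 : EuclideanSpace ℝ (Fin n)) 1,
      ((sf L u + sf L (-u)) - (sf K u + sf K (-u))) ∂μH[(m : ℝ)] = 0 := by
    have h1 : ∫ u in Metric.sphere (0 : EuclideanSpace ℝ (Fin n)) 1,
        ((sf L u + sf L (-u)) - (sf K u + sf K (-u))) ∂μH[(m : ℝ)] =
        (∫ u in Metric.sphere (0 : EuclideanSpace ℝ (Fin n)) 1,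
          (sf L u + sf L (-u)) ∂μH[(m : ℝ)]) -
        ∫ u in Metric.sphere (0 : EuclideanSpace ℝ (Fin n)) 1,
          (sf K u + sf K (-u)) ∂μH[(m : ℝ)] :=
      integral_sub (hiL.add hiLn) (hiK.add hiKn)
    have h2 : ∫ u in Metric.sphere (0 : EuclideanSpace ℝ (Fin n)) 1,
        (sf L u + sf L (-u)) ∂μH[(m : ℝ)] =
        (∫ u in Metric.sphere (0 : EuclideanSpace ℝ (Fin n)) 1, sf L u ∂μH[(m : ℝ)]) +
        ∫ u in Metric.sphere (0 : EuclideanSpace ℝ (Fin n)) 1, sf L (-u) ∂μH[(m : ℝ)] :=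
      integral_add hiL hiLn
    have h3 : ∫ u in Metric.sphere (0 : EuclideanSpace ℝ (Fin n)) 1,
        (sf K u + sf K (-u)) ∂μH[(m : ℝ)] =
        (∫ u in Metric.sphere (0 : EuclideanSpace ℝ (Fin n)) 1, sf K u ∂μH[(m : ℝ)]) +
        ∫ u in Metric.sphere (0 : EuclideanSpace ℝ (Fin n)) 1, sf K (-u) ∂μH[(m : ℝ)] :=
      integral_add hiK hiKn
    rw [h1, h2, h3, setIntegral_sphere_neg (m : ℝ) (sf L), setIntegral_sphere_neg (m : ℝ) (sf K),
      hW']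
    ring
  have hwpos : ∀ u ∈ Metric.sphere (0 : EuclideanSpace ℝ (Fin n)) 1,
      0 ≤ (fun u : EuclideanSpace ℝ (Fin n) =>
        (sf L u + sf L (-u)) - (sf K u + sf K (-u))) u := by
    intro u _
    have := hwidth_le u
    simp only []
    linarith
  have hvan := vanish_on_sphere hrank hwcont hwpos hfin hwint
  -- width equality everywhere
  have hwidth_eq : ∀ u : EuclideanSpace ℝ (Fin n),
      sf K u + sf K (-u) = sf L u + sf L (-u) := by
    intro u
    rcases eq_or_ne u 0 with rfl | hu
    · rw [neg_zero, hK0, hL0]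
    · have hnorm : ‖u‖ ≠ 0 := norm_ne_zero_iff.2 hu
      set uhat : EuclideanSpace ℝ (Fin n) := ‖u‖⁻¹ • u with huhatdef
      have huhatS : uhat ∈ Metric.sphere (0 : EuclideanSpace ℝ (Fin n)) 1 := by
        rw [mem_sphere_zero_iff_norm, huhatdef, norm_smul, Real.norm_eq_abs,
          abs_of_nonneg (by positivity), inv_mul_cancel₀ hnorm]
      have h := hvan uhat huhatS
      have hrepr : u = ‖u‖ • uhat := by
        rw [huhatdef, smul_smul, mul_inv_cancel₀ hnorm, one_smul]
      have hKu : sf K u = ‖u‖ * sf K uhat := by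
        conv_lhs => rw [hrepr]
        exact sf_smul hKne hKcp (norm_nonneg u) uhat
      have hLu : sf L u = ‖u‖ * sf L uhat := by
        conv_lhs => rw [hrepr]
        exact sf_smul hLne hLcp (norm_nonneg u) uhat
      have hreprn : -u = ‖u‖ • (-uhat) := by rw [smul_neg, ← hrepr]
      have hKun : sf K (-u) = ‖u‖ * sf K (-uhat) := by
        conv_lhs => rw [hreprn]
        exact sf_smul hKne hKcp (norm_nonneg u) (-uhat)
      have hLun : sf L (-u) = ‖u‖ * sf L (-uhat) := by
        conv_lhs => rw [hreprn]
        exact sf_smul hLne hLcp (norm_nonneg u) (-uhat)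
      have h2 : sf L uhat + sf L (-uhat) = sf K uhat + sf K (-uhat) := by linarith
      rw [hKu, hLu, hKun, hLun, ← mul_add, ← mul_add, h2]
  set φ : EuclideanSpace ℝ (Fin n) → ℝ := fun u => sf L u - sf K u with hφdef
  have hφodd : ∀ u, φ (-u) = -φ u := by
    intro u
    have := hwidth_eq u
    simp only [hφdef]
    linarith
  have hφsuper : ∀ u₁ u₂, φ (u₁ + u₂) ≤ φ u₁ + φ u₂ := by
    intro u₁ u₂
    have h := hsub3 u₁ u₂ (-(u₁ + u₂)) (by abel)
    have ho := hφodd (u₁ + u₂)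
    simp only [hφdef] at *
    linarith
  have hφadd : ∀ u₁ u₂, φ (u₁ + u₂) = φ u₁ + φ u₂ := by
    intro u₁ u₂
    refine le_antisymm (hφsuper u₁ u₂) ?_
    have h := hφsuper (-u₁) (-u₂)
    rw [← neg_add, hφodd, hφodd, hφodd] at h
    linarith
  have hφcont : Continuous φ := hfL.sub hfK
  set ψ : EuclideanSpace ℝ (Fin n) →+ ℝ := AddMonoidHom.mk' φ hφadd with hψdef
  have hψcont : Continuous ψ := hφcont
  set ℓ := ψ.toRealLinearMap hψcont with hℓdef
  set v₀ := (InnerProductSpace.toDual ℝ (EuclideanSpace ℝ (Fin n))).symm ℓ with hv₀def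
  have hv₀ : ∀ u, (inner ℝ v₀ u : ℝ) = φ u := by
    intro u
    rw [hv₀def, InnerProductSpace.toDual_symm_apply, hℓdef]
    rw [AddMonoidHom.coe_toRealLinearMap]
    rfl
  refine ⟨v₀, ?_⟩
  have himcp : IsCompact ((fun x => x + v₀) '' K) := hKcp.image (continuous_add_right v₀)
  have himcv : Convex ℝ ((fun x => x + v₀) '' K) := by
    have : (fun x => x + v₀) '' K = (fun x => v₀ + x) '' K := by
      apply Set.image_congr
      intro x _
      exact add_comm x v₀
    rw [this]
    exact hKcv.translate v₀
  apply eq_of_sf_eq hLcp hLcv hLne himcp himcv (hKne.image _)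
  intro u
  rw [sf_translate hKcp hKne v₀ u, hv₀ u]
  simp only [hφdef]
  ring
end

section
/- Let Δ be an n-simplex in ℝⁿ, the convex hull of affinely independent points v₀, …, v_n, and let K ⊆ Δ be a nonempty compact convex set. Suppose that K ∩ F = ∅ for every face F of Δ of dimension at most n-2; that is, for every subset s ⊆ {v₀, …, v_n} with at most n-1 elements, K does not meet the convex hull of s. Then for each unit vector u ∈ ℝⁿ there exists v ∈ u^⊥ such that K_u + v is contained in the relative interior of Δ_u within the hyperplane u^⊥, where K_u and Δ_u denote the orthogonal projections of K and Δ onto u^⊥. -/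
open Set

set_option maxHeartbeats 1000000

section Helpers

variable {n : ℕ} (u : EuclideanSpace ℝ (Fin n))

private lemma projHyp_mem (x : EuclideanSpace ℝ (Fin n)) :
    projHyp u x ∈ (Submodule.span ℝ {u})ᗮ := (Submodule.orthogonalProjectionOnto _ x).2

private lemma projHyp_add (x y : EuclideanSpace ℝ (Fin n)) :
    projHyp u (x + y) = projHyp u x + projHyp u y := by
  simp [projHyp, projSub, map_add]

private lemma projHyp_smul (c : ℝ) (x : EuclideanSpace ℝ (Fin n)) :
    projHyp u (c • x) = c • projHyp u x := by
  simp [projHyp, projSub, map_smul]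

private lemma sub_projHyp_mem (x : EuclideanSpace ℝ (Fin n)) :
    x - projHyp u x ∈ Submodule.span ℝ {u} := by
  have h := Submodule.sub_starProjection_mem_orthogonal (K := (Submodule.span ℝ {u})ᗮ) x
  rw [Submodule.orthogonal_orthogonal] at h
  exact h

private lemma projHyp_of_mem {x : EuclideanSpace ℝ (Fin n)}
    (h : x ∈ (Submodule.span ℝ {u})ᗮ) : projHyp u x = x :=
  Submodule.starProjection_eq_self_iff.2 h

private lemma projHyp_self : projHyp u u = 0 := by
  have h : u ∈ ((Submodule.span ℝ {u})ᗮ)ᗮ :=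
    (Submodule.span ℝ {u}).le_orthogonal_orthogonal
      (Submodule.mem_span_singleton_self u)
  simpa [projHyp, projSub] using
    congrArg (Subtype.val) (Submodule.orthogonalProjectionOnto_apply_of_mem_orthogonal h)

private lemma proj_interior_mem_intrinsicInterior (D : Set (EuclideanSpace ℝ (Fin n)))
    {x : EuclideanSpace ℝ (Fin n)} (hx : x ∈ interior D) :
    projHyp u x ∈ intrinsicInterior ℝ (projHyp u '' D) := by
  have hxD : x ∈ D := interior_subset hx
  have hspan : projHyp u x ∈ affineSpan ℝ (projHyp u '' D) :=
    subset_affineSpan ℝ _ ⟨x, hxD, rfl⟩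
  rw [mem_intrinsicInterior]
  refine ⟨⟨_, hspan⟩, ?_, rfl⟩
  set U : Set (EuclideanSpace ℝ (Fin n)) := ⋃ t : ℝ, (fun z => z + t • u) ⁻¹' interior D
    with hUdef
  have hUopen : IsOpen U :=
    isOpen_iUnion fun t => isOpen_interior.preimage (by continuity)
  have hspanle : (affineSpan ℝ (projHyp u '' D) : Set (EuclideanSpace ℝ (Fin n)))
      ⊆ ((Submodule.span ℝ {u})ᗮ : Set (EuclideanSpace ℝ (Fin n))) := by
    have h1 : affineSpan ℝ (projHyp u '' D) ≤ ((Submodule.span ℝ {u})ᗮ).toAffineSubspace := by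
      rw [affineSpan_le]
      rintro _ ⟨y, -, rfl⟩
      exact projHyp_mem u y
    exact h1
  have hsub : (Subtype.val ⁻¹' U : Set (affineSpan ℝ (projHyp u '' D)))
      ⊆ Subtype.val ⁻¹' (projHyp u '' D) := by
    rintro z hz
    obtain ⟨t, hzt⟩ := mem_iUnion.1 hz
    have hz1 : (z : EuclideanSpace ℝ (Fin n)) ∈ (Submodule.span ℝ {u})ᗮ := hspanle z.2
    refine ⟨(z : EuclideanSpace ℝ (Fin n)) + t • u, interior_subset hzt, ?_⟩
    rw [projHyp_add, projHyp_of_mem u hz1, projHyp_smul, projHyp_self, smul_zero, add_zero]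
  have hopen' : IsOpen (Subtype.val ⁻¹' U : Set (affineSpan ℝ (projHyp u '' D))) :=
    hUopen.preimage continuous_subtype_val
  have hmem : projHyp u x ∈ U := by
    obtain ⟨c, hc⟩ := Submodule.mem_span_singleton.1 (sub_projHyp_mem u x)
    refine mem_iUnion.2 ⟨c, ?_⟩
    show projHyp u x + c • u ∈ interior D
    rw [hc]
    simpa using hx
  exact interior_maximal hsub hopen' hmem

end Helpers

/-- If K avoids all faces of the simplex Δ of dimension at most n-2, then every
shadow of K translates into the relative interior of the corresponding shadow of Δ. -/
theorem stmt_9 {n : ℕ} (hn : 2 ≤ n) (p : Fin (n + 1) → EuclideanSpace ℝ (Fin n))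
    (hp : AffineIndependent ℝ p) (Δ : Set (EuclideanSpace ℝ (Fin n)))
    (hΔ : Δ = convexHull ℝ (Set.range p))
    (K : Set (EuclideanSpace ℝ (Fin n)))
    (hKne : K.Nonempty) (hKcp : IsCompact K) (hKcv : Convex ℝ K) (hKΔ : K ⊆ Δ)
    (hface : ∀ s : Finset (Fin (n + 1)), s.card ≤ n - 1 →
      K ∩ convexHull ℝ (p '' ↑s) = ∅) :
    ∀ u : EuclideanSpace ℝ (Fin n), ‖u‖ = 1 →
      ∃ v ∈ (Submodule.span ℝ {u})ᗮ,
        (fun x => x + v) '' (projHyp u '' K) ⊆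
          intrinsicInterior ℝ (projHyp u '' Δ) := by
  classical
  intro u hu
  have hu0 : u ≠ 0 := by
    intro h
    rw [h, norm_zero] at hu
    exact one_ne_zero hu.symm
  have htop : affineSpan ℝ (Set.range p) = ⊤ := by
    rw [hp.affineSpan_eq_top_iff_card_eq_finrank_add_one]
    simp [finrank_euclideanSpace_fin]
  set b : AffineBasis (Fin (n + 1)) ℝ (EuclideanSpace ℝ (Fin n)) := ⟨p, hp, htop⟩ with hbdef
  have hbp : ⇑b = p := rfl
  have hΔb : Δ = convexHull ℝ (Set.range ⇑b) := by rw [hbp]; exact hΔ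
  -- nonnegative coordinates on K
  have hK0 : ∀ k ∈ K, ∀ i, 0 ≤ b.coord i k := by
    intro k hk i
    have h1 : k ∈ {x | ∀ i, 0 ≤ b.coord i x} := by
      rw [← b.convexHull_eq_nonneg_coord]
      rw [hΔb] at hKΔ
      exact hKΔ hk
    exact h1 i
  -- at most one vanishing coordinate on K
  have hone : ∀ k ∈ K, ∀ i j, i ≠ j → b.coord i k = 0 → b.coord j k = 0 → False := by
    intro k hk i j hij hi hj
    set s : Finset (Fin (n + 1)) := {i, j}ᶜ with hsdef
    have hcard : s.card ≤ n - 1 := by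
      rw [hsdef, Finset.card_compl, Finset.card_pair hij]
      simp only [Fintype.card_fin]
      omega
    have hzero : ∀ m, m ∉ s → b.coord m k = 0 := by
      intro m hm
      rw [hsdef, Finset.notMem_compl] at hm
      rcases Finset.mem_insert.1 hm with h | h
      · rwa [h]
      · rw [Finset.mem_singleton.1 h]; exact hj
    have hsum : ∑ m ∈ s, b.coord m k = 1 := by
      have h1 : ∑ m, b.coord m k = 1 := b.sum_coord_apply_eq_one k
      rw [← h1]
      exact Finset.sum_subset (Finset.subset_univ s) (fun m _ hm => hzero m hm)
    have hkmem : k ∈ convexHull ℝ (p '' ↑s) := by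
      have hb1 : Finset.univ.centerMass (fun m => b.coord m k) ⇑b = k := by
        rw [← affineCombination_eq_centerMass (b.sum_coord_apply_eq_one k)]
        exact b.affineCombination_coord_eq_self k
      rw [← hbp, ← hb1, ← Finset.centerMass_filter_ne_zero]
      apply Finset.centerMass_mem_convexHull
      · intro m _
        exact hK0 k hk m
      · rw [Finset.sum_filter_ne_zero, b.sum_coord_apply_eq_one k]
        exact one_pos
      · intro m hm
        have hm0 : b.coord m k ≠ 0 := (Finset.mem_filter.1 hm).2
        have hms : m ∈ s := by
          by_contra hms
          exact hm0 (hzero m hms)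
        exact ⟨m, hms, rfl⟩
    have h2 := hface s hcard
    rw [Set.eq_empty_iff_forall_notMem] at h2
    exact h2 k ⟨hk, hkmem⟩
  -- linear parts of the barycentric coordinates
  set L : Fin (n + 1) → EuclideanSpace ℝ (Fin n) →ₗ[ℝ] ℝ :=
    fun i => (b.coord i).linear with hLdef
  have hcoord_add : ∀ i (x y : EuclideanSpace ℝ (Fin n)),
      b.coord i (x + y) = L i x + b.coord i y := by
    intro i x y
    have h := (b.coord i).map_vadd y x
    rw [vadd_eq_add, vadd_eq_add] at h
    exact h
  set β : Fin (n + 1) → ℝ := fun i => L i u with hβdef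
  have hsumβ : ∑ i, β i = 0 := by
    have h1 : ∑ i, b.coord i (u + 0) = 1 := b.sum_coord_apply_eq_one _
    have h2 : ∑ i, b.coord i (0 : EuclideanSpace ℝ (Fin n)) = 1 :=
      b.sum_coord_apply_eq_one _
    have h3 : ∀ i, β i = b.coord i (u + 0) - b.coord i 0 := by
      intro i
      show L i u = _
      rw [hcoord_add]; ring
    calc ∑ i, β i = ∑ i, (b.coord i (u + 0) - b.coord i 0) := by
          exact Finset.sum_congr rfl fun i _ => h3 i
      _ = 0 := by rw [Finset.sum_sub_distrib, h1, h2]; ring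
  have hβne : ∃ i, β i ≠ 0 := by
    by_contra h
    push_neg at h
    have h1 : ∀ i, b.coord i (u + 0) = b.coord i 0 := by
      intro i
      have h' : L i u = 0 := h i
      rw [hcoord_add, h', zero_add]
    have h2 : u + 0 = (0 : EuclideanSpace ℝ (Fin n)) := b.ext_elem h1
    rw [add_zero] at h2
    exact hu0 h2
  obtain ⟨i₁, hi₁⟩ := hβne
  have hIpos : ∃ i, 0 < β i := by
    by_contra h
    push_neg at h
    have h1 : ∑ i, β i < ∑ i, (0 : ℝ) :=
      Finset.sum_lt_sum (fun i _ => h i)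
        ⟨i₁, Finset.mem_univ _, lt_of_le_of_ne (h i₁) hi₁⟩
    rw [Finset.sum_const_zero, hsumβ] at h1
    exact lt_irrefl _ h1
  have hIneg : ∃ i, β i < 0 := by
    by_contra h
    push_neg at h
    have h1 : ∑ i, (0 : ℝ) < ∑ i, β i :=
      Finset.sum_lt_sum (fun i _ => h i)
        ⟨i₁, Finset.mem_univ _, lt_of_le_of_ne (h i₁) (Ne.symm hi₁)⟩
    rw [Finset.sum_const_zero, hsumβ] at h1
    exact lt_irrefl _ h1
  -- the barycenter
  have hwsum : ∑ _i : Fin (n + 1), ((n : ℝ) + 1)⁻¹ = 1 := by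
    rw [Finset.sum_const, Finset.card_univ, Fintype.card_fin, nsmul_eq_mul]
    push_cast
    rw [mul_inv_cancel₀]
    positivity
  set x₁ : EuclideanSpace ℝ (Fin n) :=
    Finset.univ.affineCombination ℝ ⇑b (fun _ => ((n : ℝ) + 1)⁻¹) with hx₁def
  have hx₁coord : ∀ i, b.coord i x₁ = ((n : ℝ) + 1)⁻¹ := fun i =>
    b.coord_apply_combination_of_mem (Finset.mem_univ i) hwsum
  -- the inward direction v₀
  set v₀ : EuclideanSpace ℝ (Fin n) := projHyp u (x₁ - b i₁) with hv₀def
  have hv₀mem : v₀ ∈ (Submodule.span ℝ {u})ᗮ := projHyp_mem u _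
  have hLproj : ∀ i, β i = 0 → ∀ z, L i (projHyp u z) = L i z := by
    intro i h0 z
    obtain ⟨c, hc⟩ := Submodule.mem_span_singleton.1 (sub_projHyp_mem u z)
    have h1 : L i (z - projHyp u z) = 0 := by
      rw [← hc, map_smul, smul_eq_mul]
      have h' : L i u = 0 := h0
      rw [h', mul_zero]
    have h2 := map_sub (L i) z (projHyp u z)
    rw [h1] at h2
    linarith
  have hLv₀pos : ∀ i, β i = 0 → 0 < L i v₀ := by
    intro i h0
    have hii₁ : i ≠ i₁ := by
      rintro rfl
      exact hi₁ h0
    have h1 : L i v₀ = L i (x₁ - b i₁) := hLproj i h0 _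
    have h2 : L i (x₁ - b i₁) = b.coord i x₁ - b.coord i (b i₁) := by
      have h3 := hcoord_add i (x₁ - b i₁) (b i₁)
      rw [sub_add_cancel] at h3
      linarith
    rw [h1, h2, hx₁coord i, b.coord_apply_ne hii₁, sub_zero]
    positivity
    -- uniform positive lower bounds for the pair functions on K
  have hpair : ∀ i j : Fin (n + 1), ∃ δ : ℝ, 0 < δ ∧
      (0 < β i → β j < 0 → ∀ k ∈ K, δ ≤ (-β j) * b.coord i k + β i * b.coord j k) := by
    intro i j
    by_cases hc : 0 < β i ∧ β j < 0
    · obtain ⟨hi, hj⟩ := hc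
      have hij : i ≠ j := by
        rintro rfl
        linarith
      have hg : Continuous fun x => (-β j) * b.coord i x + β i * b.coord j x :=
        (continuous_const.mul (continuous_barycentric_coord b i)).add
          (continuous_const.mul (continuous_barycentric_coord b j))
      obtain ⟨k₀, hk₀K, hk₀min⟩ := hKcp.exists_isMinOn hKne hg.continuousOn
      refine ⟨_, ?_, fun _ _ k hk => isMinOn_iff.1 hk₀min k hk⟩
      have h0i := hK0 k₀ hk₀K i
      have h0j := hK0 k₀ hk₀K j
      rcases h0i.lt_or_eq with hi0 | hi0
      · nlinarith
      · rcases h0j.lt_or_eq with hj0 | hj0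
        · nlinarith
        · exact (hone k₀ hk₀K i j hij hi0.symm hj0.symm).elim
    · exact ⟨1, one_pos, fun h1 h2 => absurd ⟨h1, h2⟩ hc⟩
  choose δ hδpos hδ using hpair
  set c : Fin (n + 1) → Fin (n + 1) → ℝ :=
    fun i j => (-β j) * L i v₀ + β i * L j v₀ with hcdef
  obtain ⟨ε, hε0, hεlt⟩ : ∃ ε : ℝ, 0 < ε ∧ ∀ i j, ε * |c i j| < δ i j := by
    have hne : (Finset.univ : Finset (Fin (n + 1) × Fin (n + 1))).Nonempty :=
      ⟨(i₁, i₁), Finset.mem_univ _⟩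
    refine ⟨Finset.univ.inf' hne (fun q => δ q.1 q.2 / (1 + |c q.1 q.2|)), ?_, ?_⟩
    · rw [Finset.lt_inf'_iff]
      intro q _
      exact div_pos (hδpos q.1 q.2) (by positivity)
    · intro i j
      have h1 : Finset.univ.inf' hne (fun q => δ q.1 q.2 / (1 + |c q.1 q.2|))
          ≤ δ i j / (1 + |c i j|) := Finset.inf'_le _ (Finset.mem_univ (i, j))
      have h2 : (0:ℝ) ≤ |c i j| := abs_nonneg _
      have h3 : (0:ℝ) < 1 + |c i j| := by positivity
      have h4 : δ i j / (1 + |c i j|) * |c i j| < δ i j := by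
        rw [div_mul_eq_mul_div, div_lt_iff₀ h3]
        nlinarith [hδpos i j]
      calc Finset.univ.inf' hne (fun q => δ q.1 q.2 / (1 + |c q.1 q.2|)) * |c i j|
          ≤ δ i j / (1 + |c i j|) * |c i j| := mul_le_mul_of_nonneg_right h1 h2
        _ < δ i j := h4
  refine ⟨ε • v₀, Submodule.smul_mem _ _ hv₀mem, ?_⟩
  rintro y ⟨y', ⟨k, hk, rfl⟩, rfl⟩
  show projHyp u k + ε • v₀ ∈ intrinsicInterior ℝ (projHyp u '' Δ)
  set a : Fin (n + 1) → ℝ := fun i => b.coord i k + ε * L i v₀ with hadef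
  have hai0 : ∀ i, β i = 0 → 0 < a i := by
    intro i h0
    have h1 := hK0 k hk i
    have h2 := hLv₀pos i h0
    show 0 < b.coord i k + ε * L i v₀
    nlinarith
  have haij : ∀ i j, 0 < β i → β j < 0 → 0 < (-β j) * a i + β i * a j := by
    intro i j hi hj
    have h1 := hδ i j hi hj k hk
    have h2 : (-β j) * a i + β i * a j
        = ((-β j) * b.coord i k + β i * b.coord j k) + ε * c i j := by
      show (-β j) * (b.coord i k + ε * L i v₀) + β i * (b.coord j k + ε * L j v₀)
          = ((-β j) * b.coord i k + β i * b.coord j k)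
            + ε * ((-β j) * L i v₀ + β i * L j v₀)
      ring
    have h3 : -(ε * c i j) ≤ ε * |c i j| := by
      have h5 := neg_abs_le (ε * c i j)
      rw [abs_mul, abs_of_pos hε0] at h5
      linarith
    have h4 := hεlt i j
    rw [h2]
    linarith
  set P : Finset (Fin (n + 1)) := Finset.univ.filter (fun i => 0 < β i) with hPdef
  set N : Finset (Fin (n + 1)) := Finset.univ.filter (fun i => β i < 0) with hNdef
  obtain ⟨ip, hip⟩ := hIpos
  obtain ⟨iq, hiq⟩ := hIneg
  have hPne : P.Nonempty := ⟨ip, Finset.mem_filter.2 ⟨Finset.mem_univ _, hip⟩⟩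
  have hNne : N.Nonempty := ⟨iq, Finset.mem_filter.2 ⟨Finset.mem_univ _, hiq⟩⟩
  set Tl : ℝ := P.sup' hPne (fun i => -a i / β i) with hTldef
  set Th : ℝ := N.inf' hNne (fun j => a j / (-β j)) with hThdef
  have hTlh : Tl < Th := by
    rw [hTldef, Finset.sup'_lt_iff]
    intro i hiP
    rw [hThdef, Finset.lt_inf'_iff]
    intro j hjN
    have hi : 0 < β i := (Finset.mem_filter.1 hiP).2
    have hj : β j < 0 := (Finset.mem_filter.1 hjN).2
    rw [div_lt_div_iff₀ hi (by linarith : (0:ℝ) < -β j)]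
    nlinarith [haij i j hi hj]
  set t : ℝ := (Tl + Th) / 2 with htdef
  have hta : ∀ i, 0 < a i + t * β i := by
    intro i
    rcases lt_trichotomy (β i) 0 with hneg | h0 | hpos
    · have h2 : Th ≤ a i / (-β i) :=
        Finset.inf'_le (fun j => a j / (-β j)) (Finset.mem_filter.2 ⟨Finset.mem_univ i, hneg⟩)
      have h1 : t < a i / (-β i) := by
        rw [htdef]
        linarith
      rw [lt_div_iff₀ (by linarith : (0:ℝ) < -β i)] at h1
      nlinarith
    · have h1 := hai0 i h0
      rw [h0, mul_zero, add_zero]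
      exact h1
    · have h2 : -a i / β i ≤ Tl :=
        Finset.le_sup' (fun j => -a j / β j) (Finset.mem_filter.2 ⟨Finset.mem_univ i, hpos⟩)
      have h1 : -a i / β i < t := by
        rw [htdef]
        linarith
      rw [div_lt_iff₀ hpos] at h1
      nlinarith
  have hxint : (ε • v₀ + t • u) + k ∈ interior Δ := by
    rw [hΔb, b.interior_convexHull]
    intro i
    show 0 < b.coord i ((ε • v₀ + t • u) + k)
    have h2 : L i (ε • v₀ + t • u) = ε * L i v₀ + t * β i := by
      rw [map_add, map_smul, map_smul, smul_eq_mul, smul_eq_mul]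
    rw [hcoord_add, h2]
    have h3 := hta i
    have ha : a i = b.coord i k + ε * L i v₀ := rfl
    linarith
  have hfin := proj_interior_mem_intrinsicInterior u Δ hxint
  have hπx : projHyp u ((ε • v₀ + t • u) + k) = projHyp u k + ε • v₀ := by
    rw [projHyp_add, projHyp_add, projHyp_smul, projHyp_smul, projHyp_self, smul_zero,
      projHyp_of_mem u hv₀mem, add_zero, add_comm (ε • v₀) (projHyp u k)]
  rwa [hπx] at hfin
end

section
/- Let Δ be an n-simplex in ℝⁿ, the convex hull of affinely independent points v₀, …, v_n, and let K ⊆ Δ be a nonempty compact convex set. Suppose that K ∩ F = ∅ for every face F of Δ of dimension at most n-2; that is, for every subset s ⊆ {v₀, …, v_n} with at most n-1 elements, K does not meet the convex hull of s. Then there exists ε > 1 (independent of direction) such that for every unit vector u ∈ ℝⁿ there exists v ∈ u^⊥ with ε·K_u + v ⊆ Δ_u, where K_u and Δ_u denote the orthogonal projections of K and Δ onto u^⊥ and ε·K_u = {εx : x ∈ K_u}. -/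
open Set

set_option maxHeartbeats 1000000 in
/-- If K avoids all faces of the simplex Δ of dimension at most n-2, then some
dilate εK with ε > 1 has all its shadows translating into those of Δ. -/
theorem stmt_10 {n : ℕ} (hn : 2 ≤ n) (p : Fin (n + 1) → EuclideanSpace ℝ (Fin n))
    (hp : AffineIndependent ℝ p) (Δ : Set (EuclideanSpace ℝ (Fin n)))
    (hΔ : Δ = convexHull ℝ (Set.range p))
    (K : Set (EuclideanSpace ℝ (Fin n)))
    (hKne : K.Nonempty) (hKcp : IsCompact K) (hKcv : Convex ℝ K) (hKΔ : K ⊆ Δ)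
    (hface : ∀ s : Finset (Fin (n + 1)), s.card ≤ n - 1 →
      K ∩ convexHull ℝ (p '' ↑s) = ∅) :
    ∃ ε : ℝ, 1 < ε ∧ ∀ u : EuclideanSpace ℝ (Fin n), ‖u‖ = 1 →
      ∃ v ∈ (Submodule.span ℝ {u})ᗮ,
        (fun x => ε • x + v) '' (projHyp u '' K) ⊆ projHyp u '' Δ := by
  classical
  have hcard : Fintype.card (Fin (n+1)) = Module.finrank ℝ (EuclideanSpace ℝ (Fin n)) + 1 := by
    simp [finrank_euclideanSpace_fin]
  have hspan : affineSpan ℝ (Set.range p) = ⊤ :=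
    hp.affineSpan_eq_top_iff_card_eq_finrank_add_one.mpr hcard
  let b : AffineBasis (Fin (n+1)) ℝ (EuclideanSpace ℝ (Fin n)) := ⟨p, hp, hspan⟩
  have hb : ∀ i, b i = p i := fun i => rfl
  have hcoord_nonneg : ∀ x ∈ Δ, ∀ i, 0 ≤ b.coord i x := by
    intro x hx i
    rw [hΔ] at hx
    have hsub : convexHull ℝ (Set.range p) ⊆ (b.coord i) ⁻¹' (Set.Ici 0) := by
      apply convexHull_min
      · rintro _ ⟨j, rfl⟩
        simp only [Set.mem_preimage, Set.mem_Ici]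
        rcases eq_or_ne i j with rfl | h
        · rw [← hb i, b.coord_apply_eq]; norm_num
        · rw [← hb j, b.coord_apply_ne h]
      · exact (convex_Ici 0).affine_preimage _
    exact hsub hx
  have hcomb : ∀ x : EuclideanSpace ℝ (Fin n), ∑ i, b.coord i x • p i = x := by
    intro x
    have := b.linear_combination_coord_eq_self x
    simpa [hb] using this
  have hpair : ∀ z : Fin (n+1) × Fin (n+1), ∃ a : ℝ, 0 < a ∧
      (z.1 ≠ z.2 → ∀ x ∈ K, a ≤ max (b.coord z.1 x) (b.coord z.2 x)) := by
    rintro ⟨i, j⟩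
    rcases eq_or_ne i j with rfl | hij
    · exact ⟨1, one_pos, fun h => absurd rfl h⟩
    have hc : Continuous fun x => max (b.coord i x) (b.coord j x) :=
      ((b.coord i).continuous_of_finiteDimensional).max
        ((b.coord j).continuous_of_finiteDimensional)
    obtain ⟨x₀, hx₀K, hmin⟩ := hKcp.exists_isMinOn hKne hc.continuousOn
    refine ⟨_, ?_, fun _ x hx => hmin hx⟩
    by_contra hle
    push_neg at hle
    have hi0 : b.coord i x₀ = 0 :=
      le_antisymm (le_trans (le_max_left _ _) hle) (hcoord_nonneg _ (hKΔ hx₀K) i)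
    have hj0 : b.coord j x₀ = 0 :=
      le_antisymm (le_trans (le_max_right _ _) hle) (hcoord_nonneg _ (hKΔ hx₀K) j)
    set s : Finset (Fin (n+1)) := {i, j}ᶜ with hs
    have hcards : s.card ≤ n - 1 := by
      have h2 : ({i, j} : Finset (Fin (n+1))).card = 2 := by
        rw [Finset.card_insert_of_notMem (by simpa using hij), Finset.card_singleton]
      rw [hs, Finset.card_compl, h2, Fintype.card_fin]
      omega
    have hvanish : ∀ k ∈ Finset.univ, k ∉ s → b.coord k x₀ = 0 := by
      intro k _ hk
      rw [hs] at hk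
      simp only [Finset.mem_compl, not_not] at hk
      rcases Finset.mem_insert.mp hk with rfl | hk
      · exact hi0
      · rw [Finset.mem_singleton.mp hk]; exact hj0
    have hsum1 : ∑ k ∈ s, b.coord k x₀ = 1 := by
      rw [Finset.sum_subset (Finset.subset_univ s) hvanish]
      exact b.sum_coord_apply_eq_one x₀
    have hmem : x₀ ∈ convexHull ℝ (p '' ↑s) := by
      have H := Finset.centerMass_mem_convexHull s
        (fun k _ => hcoord_nonneg _ (hKΔ hx₀K) k) (by rw [hsum1]; norm_num)
        (fun k hk => Set.mem_image_of_mem p (by exact_mod_cast hk))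
      rw [Finset.centerMass_eq_of_sum_1 _ _ hsum1] at H
      have hxeq : ∑ k ∈ s, b.coord k x₀ • p k = x₀ := by
        rw [Finset.sum_subset (Finset.subset_univ s)
          (fun k hk1 hk2 => by rw [hvanish k hk1 hk2, zero_smul])]
        exact hcomb x₀
      rwa [hxeq] at H
    have : x₀ ∈ K ∩ convexHull ℝ (p '' ↑s) := ⟨hx₀K, hmem⟩
    rw [hface s hcards] at this
    exact this
  choose A hA0 hA using hpair
  have hoff : (Finset.univ.offDiag : Finset (Fin (n+1) × Fin (n+1))).Nonempty := by
    refine ⟨(⟨0, by omega⟩, ⟨1, by omega⟩), ?_⟩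
    simp only [Finset.mem_offDiag, Finset.mem_univ, true_and]
    intro h
    exact absurd (congrArg Fin.val h) (by simp)
  set α : ℝ := Finset.univ.offDiag.inf' hoff A with hα
  have hα0 : 0 < α := by
    rw [hα, Finset.lt_inf'_iff]
    exact fun z _ => hA0 z
  have hαle : ∀ i j : Fin (n+1), i ≠ j → ∀ x ∈ K,
      α ≤ max (b.coord i x) (b.coord j x) := by
    intro i j hij x hx
    exact le_trans (Finset.inf'_le A (by simp [Finset.mem_offDiag, hij])) (hA (i, j) hij x hx)
  refine ⟨1 + α, by linarith, ?_⟩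
  set ε : ℝ := 1 + α with hε
  intro u hu
  set S : Submodule ℝ (EuclideanSpace ℝ (Fin n)) := (Submodule.span ℝ {u})ᗮ with hSdef
  set L : EuclideanSpace ℝ (Fin n) →ₗ[ℝ] EuclideanSpace ℝ (Fin n) :=
    S.subtype ∘ₗ (S.orthogonalProjectionOnto).toLinearMap with hL
  have hLproj : ∀ x, projHyp u x = L x := fun x => rfl
  set q : Fin (n+1) → EuclideanSpace ℝ (Fin n) := fun i => L (p i) with hqdef
  have hqi : ∀ i, q i = L (p i) := fun i => rfl
  have hqS : ∀ i, q i ∈ S := fun i => (S.orthogonalProjectionOnto (p i)).2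
  have hu0 : u ≠ 0 := fun h => by simp [h] at hu
  have hfinS : Module.finrank ℝ S = n - 1 := by
    have h1 : Module.finrank ℝ (Submodule.span ℝ ({u} : Set (EuclideanSpace ℝ (Fin n)))) = 1 :=
      finrank_span_singleton hu0
    have h2 := Submodule.finrank_add_finrank_orthogonal
      (K := Submodule.span ℝ ({u} : Set (EuclideanSpace ℝ (Fin n))))
    rw [h1, finrank_euclideanSpace_fin, ← hSdef] at h2
    omega
  have hnotind : ¬ AffineIndependent ℝ q := by
    intro hind
    have hfr : Module.finrank ℝ (vectorSpan ℝ (Set.range q)) = n :=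
      hind.finrank_vectorSpan (n := n) (by simp)
    have hle : vectorSpan ℝ (Set.range q) ≤ S := by
      rw [vectorSpan_def]
      apply Submodule.span_le.mpr
      rintro _ ⟨a, ⟨i, rfl⟩, c, ⟨j, rfl⟩, rfl⟩
      exact S.sub_mem (hqS i) (hqS j)
    have h3 := Submodule.finrank_mono hle
    rw [hfr, hfinS] at h3
    omega
  rw [affineIndependent_iff_of_fintype] at hnotind
  push_neg at hnotind
  obtain ⟨w, hw0, hwvs, i₀, hwi₀⟩ := hnotind
  have hwlin : ∑ i, w i • q i = 0 := by
    rw [← Finset.weightedVSub_eq_linear_combination _ hw0]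
    exact hwvs
  set P : ℝ := ∑ i, max (w i) 0 with hP
  have hPpos : 0 < P := by
    have hex : ∃ i, 0 < w i := by
      by_contra hno
      push_neg at hno
      exact hwi₀
        ((Finset.sum_eq_zero_iff_of_nonpos (fun i _ => hno i)).mp hw0 i₀ (Finset.mem_univ _))
    obtain ⟨i, hi⟩ := hex
    calc (0:ℝ) < w i := hi
    _ ≤ max (w i) 0 := le_max_left _ _
    _ ≤ P := by
        rw [hP]
        exact Finset.single_le_sum (fun k _ => le_max_right (w k) 0) (Finset.mem_univ i)
  set d : Fin (n+1) → ℝ := fun i => w i / P with hd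
  have hdi : ∀ i, d i = w i / P := fun i => rfl
  have hd0 : ∑ i, d i = 0 := by
    simp only [hdi, ← Finset.sum_div, hw0, zero_div]
  have hdlin : ∑ i, d i • q i = 0 := by
    have hterm : ∀ i, d i • q i = P⁻¹ • (w i • q i) := fun i => by
      simp only [hdi, div_eq_inv_mul, mul_smul]
    rw [Finset.sum_congr rfl fun i _ => hterm i, ← Finset.smul_sum, hwlin, smul_zero]
  have hmaxdiv : ∀ i, max (d i) 0 = max (w i) 0 / P := by
    intro i
    simp only [hdi]
    rcases le_total (w i) 0 with h | h
    · rw [max_eq_right (div_nonpos_iff.2 (Or.inr ⟨h, hPpos.le⟩)), max_eq_right h, zero_div]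
    · rw [max_eq_left (div_nonneg h hPpos.le), max_eq_left h]
  have hdp : ∑ i, max (d i) 0 = 1 := by
    rw [Finset.sum_congr rfl fun i _ => hmaxdiv i, ← Finset.sum_div, ← hP]
    exact div_self hPpos.ne'
  have hmaxneg : ∀ a : ℝ, max (-a) 0 = max a 0 - a := by
    intro a
    rcases le_total a 0 with h | h
    · rw [max_eq_left (by linarith), max_eq_right h]; ring
    · rw [max_eq_right (by linarith), max_eq_left h]; ring
  have hdm : ∑ i, max (-(d i)) 0 = 1 := by
    simp only [hmaxneg, Finset.sum_sub_distrib, hdp, hd0, sub_zero]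
  set m : EuclideanSpace ℝ (Fin n) := ∑ i, max (d i) 0 • q i with hm
  refine ⟨(1 - ε) • m, Submodule.smul_mem _ _
    (Submodule.sum_mem _ fun i _ => Submodule.smul_mem _ _ (hqS i)), ?_⟩
  rintro z ⟨y, ⟨x, hxK, rfl⟩, rfl⟩
  set lam : Fin (n+1) → ℝ := fun i => b.coord i x with hlam
  have hlami : ∀ i, lam i = b.coord i x := fun i => rfl
  have hlam0 : ∀ i, 0 ≤ lam i := fun i => hcoord_nonneg x (hKΔ hxK) i
  have hlam1 : ∑ i, lam i = 1 := b.sum_coord_apply_eq_one x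
  obtain ⟨j, -, hjmin⟩ := Finset.exists_min_image Finset.univ lam Finset.univ_nonempty
  have hlamα : ∀ i, i ≠ j → α ≤ lam i := by
    intro i hij
    have := hαle i j hij x hxK
    rw [← hlami i, ← hlami j] at this
    rwa [max_eq_left (hjmin i (Finset.mem_univ i))] at this
  set t : ℝ := if 0 < d j then ε - 1 else 0 with ht
  set μ : Fin (n+1) → ℝ := fun i => ε * lam i + (1 - ε) * max (d i) 0 + t * d i with hμ
  have hμi : ∀ i, μ i = ε * lam i + (1 - ε) * max (d i) 0 + t * d i := fun i => rfl
  have hμsum : ∑ i, μ i = 1 := by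
    simp only [hμi, Finset.sum_add_distrib, ← Finset.mul_sum, hlam1, hdp, hd0]
    ring
  have hμ0 : ∀ i, 0 ≤ μ i := by
    intro i
    have hd1 : max (d i) 0 ≤ 1 := by
      rw [← hdp]
      exact Finset.single_le_sum (fun k _ => le_max_right (d k) 0) (Finset.mem_univ i)
    have hd1' : max (-(d i)) 0 ≤ 1 := by
      rw [← hdm]
      exact Finset.single_le_sum (fun k _ => le_max_right (-(d k)) 0) (Finset.mem_univ i)
    rw [hμi]
    by_cases hdj : 0 < d j
    · rw [ht, if_pos hdj]
      rcases eq_or_ne i j with rfl | hij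
      · rw [max_eq_left hdj.le]
        have := hlam0 i
        nlinarith [hα0]
      · have h1 := hlamα i hij
        have h2 := hmaxneg (d i)
        nlinarith [hα0, le_max_right (d i) (0:ℝ), le_max_left (d i) (0:ℝ)]
    · rw [ht, if_neg hdj]
      push_neg at hdj
      rcases eq_or_ne i j with rfl | hij
      · rw [max_eq_right hdj]
        have := hlam0 i
        nlinarith [hα0]
      · have h1 := hlamα i hij
        nlinarith [hα0, le_max_right (d i) (0:ℝ)]
  refine ⟨∑ i, μ i • p i, ?_, ?_⟩
  · rw [hΔ]
    have H := Finset.centerMass_mem_convexHull (w := μ) (z := p) (s := Set.range p)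
      Finset.univ (fun i _ => hμ0 i) (by rw [hμsum]; norm_num)
      (fun i _ => Set.mem_range_self i)
    rwa [Finset.centerMass_eq_of_sum_1 _ _ hμsum] at H
  · show projHyp u (∑ i, μ i • p i) = ε • projHyp u x + (1 - ε) • m
    rw [hLproj, hLproj]
    have hLx : L x = ∑ i, lam i • q i := by
      conv_lhs => rw [← hcomb x]
      rw [map_sum]
      refine Finset.sum_congr rfl fun i _ => ?_
      rw [map_smul, hlami, hqi]
    rw [map_sum]
    have hterm : ∀ i, L (μ i • p i) =
        ε • (lam i • q i) + (1 - ε) • (max (d i) 0 • q i) + t • (d i • q i) := by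
      intro i
      rw [map_smul, hμi]
      simp only [smul_smul, ← add_smul]
      rfl
    calc (∑ i, L (μ i • p i))
        = ∑ i, (ε • (lam i • q i) + (1 - ε) • (max (d i) 0 • q i) + t • (d i • q i)) :=
          Finset.sum_congr rfl fun i _ => hterm i
      _ = ε • (∑ i, lam i • q i) + (1 - ε) • (∑ i, max (d i) 0 • q i)
            + t • (∑ i, d i • q i) := by
          simp only [Finset.sum_add_distrib, Finset.smul_sum]
      _ = ε • L x + (1 - ε) • m := by
          rw [hdlin, smul_zero, add_zero, ← hLx, ← hm]
end

section
/- Let C be a nonempty closed subset of the unit sphere S^{n-1} ⊆ ℝⁿ of the form C = Γ ∩ S^{n-1} for a closed convex cone Γ ⊆ ℝⁿ, and suppose C lies in an open hemisphere, i.e., there exists a unit vector e with e·c > 0 for all c ∈ C. Then there exists a unit vector v ∈ S^{n-1} such that -v ∈ C and v·c ≤ 0 for every c ∈ C (that is, v ∈ (-C) ∩ C*, where C* = {u ∈ S^{n-1} : u·c ≤ 0 for all c ∈ C} is the spherical polar dual of C). -/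
open Set

/-- A closed spherical convex set C inside an open hemisphere admits a unit vector
v ∈ (-C) ∩ C*. -/
theorem stmt_11 {n : ℕ} (hn : 1 ≤ n) (C : Set (EuclideanSpace ℝ (Fin n)))
    (hCne : C.Nonempty) (hCcl : IsClosed C)
    (hC : ∃ Γ : Set (EuclideanSpace ℝ (Fin n)), IsClosed Γ ∧ Convex ℝ Γ ∧
      (∀ x ∈ Γ, ∀ c : ℝ, 0 ≤ c → c • x ∈ Γ) ∧
      C = Γ ∩ Metric.sphere (0 : EuclideanSpace ℝ (Fin n)) 1)
    (hhemi : ∃ e : EuclideanSpace ℝ (Fin n), ‖e‖ = 1 ∧ ∀ c ∈ C, (0 : ℝ) < inner ℝ e c) :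
    ∃ v : EuclideanSpace ℝ (Fin n), ‖v‖ = 1 ∧ -v ∈ C ∧
      ∀ c ∈ C, (inner ℝ v c : ℝ) ≤ 0 := by
  obtain ⟨Γ, hΓcl, hΓconv, hΓcone, hCeq⟩ := hC
  obtain ⟨e, he1, hepos⟩ := hhemi
  set K := closure (convexHull ℝ C) with hKdef
  have hCsub : C ⊆ Metric.sphere (0 : EuclideanSpace ℝ (Fin n)) 1 := by
    rw [hCeq]; exact inter_subset_right
  have hCbd : Bornology.IsBounded C := (Metric.isBounded_sphere).subset hCsub
  have hCcomp : IsCompact C := Metric.isCompact_of_isClosed_isBounded hCcl hCbd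
  have hKcomp : IsCompact K :=
    Metric.isCompact_of_isClosed_isBounded isClosed_closure
      (isBounded_convexHull.mpr hCbd).closure
  have hKconv : Convex ℝ K := (convex_convexHull ℝ C).closure
  have hCK : C ⊆ K := (subset_convexHull ℝ C).trans subset_closure
  have hKne : K.Nonempty := hCne.mono hCK
  obtain ⟨p, hpK, hpmin⟩ := hKcomp.exists_isMinOn hKne continuous_norm.continuousOn
  -- a positive lower bound for ⟪e, ·⟫ on C, hence on K
  have hecont : Continuous fun x : EuclideanSpace ℝ (Fin n) => (inner ℝ e x : ℝ) :=
    continuous_const.inner continuous_id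
  obtain ⟨c₀, hc₀C, hc₀min⟩ := hCcomp.exists_isMinOn hCne hecont.continuousOn
  set δ : ℝ := inner ℝ e c₀ with hδdef
  have hδpos : 0 < δ := hepos c₀ hc₀C
  have hKge : ∀ x ∈ K, δ ≤ inner ℝ e x := by
    have hhs : Convex ℝ {x : EuclideanSpace ℝ (Fin n) | δ ≤ inner ℝ e x} :=
      convex_halfSpace_ge
        ⟨fun a b => inner_add_right e a b, fun r a => real_inner_smul_right e a r⟩ δ
    have hcl : IsClosed {x : EuclideanSpace ℝ (Fin n) | δ ≤ inner ℝ e x} :=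
      isClosed_le continuous_const hecont
    intro x hx
    exact closure_minimal (convexHull_min (fun c hc => hc₀min hc) hhs) hcl hx
  have hpne : p ≠ 0 := by
    intro h
    have h2 := hKge p hpK
    rw [h, inner_zero_right] at h2
    linarith
  have hpnorm : (0:ℝ) < ‖p‖ := norm_pos_iff.mpr hpne
  have : Nonempty ↑K := hKne.to_subtype
  have hiInf : ‖(0:EuclideanSpace ℝ (Fin n)) - p‖ = ⨅ w : K, ‖(0:EuclideanSpace ℝ (Fin n)) - w‖ := by
    apply le_antisymm
    · apply le_ciInf
      intro w
      simpa using hpmin w.2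
    · exact ciInf_le ⟨0, fun x ⟨w, hw⟩ => hw ▸ norm_nonneg _⟩ (⟨p, hpK⟩ : K)
  have hineq := (norm_eq_iInf_iff_real_inner_le_zero hKconv hpK).mp hiInf
  have key : ∀ c ∈ C, ‖p‖ ^ 2 ≤ inner ℝ p c := by
    intro c hc
    have h2 : (inner ℝ ((0:EuclideanSpace ℝ (Fin n)) - p) (c - p) : ℝ) ≤ 0 :=
      hineq c (hCK hc)
    rw [zero_sub, inner_neg_left, inner_sub_right] at h2
    have h3 := real_inner_self_eq_norm_sq p
    nlinarith
  have hpΓ : p ∈ Γ := by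
    have hsub : C ⊆ Γ := by rw [hCeq]; exact inter_subset_left
    exact closure_minimal (convexHull_min hsub hΓconv) hΓcl hpK
  refine ⟨-(‖p‖⁻¹ • p), ?_, ?_, ?_⟩
  · rw [norm_neg, norm_smul, norm_inv, norm_norm, inv_mul_cancel₀ (ne_of_gt hpnorm)]
  · rw [neg_neg, hCeq]
    constructor
    · exact hΓcone p hpΓ _ (inv_nonneg.mpr hpnorm.le)
    · simp only [Metric.mem_sphere, dist_zero_right]
      rw [norm_smul, norm_inv, norm_norm, inv_mul_cancel₀ (ne_of_gt hpnorm)]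
  · intro c hc
    have h1 := key c hc
    rw [inner_neg_left, real_inner_smul_left]
    have h4 : (0:ℝ) < inner ℝ p c := lt_of_lt_of_le (by positivity) h1
    have h5 := mul_nonneg (inv_nonneg.mpr hpnorm.le) h4.le
    linarith
end
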